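/- arXiv:1502.05965 — 4 statements merged into one kernel-verified Lean document; each statement's English description precedes it below -/
import Mathlib

section
/- Let p be an odd prime. Every nonabelian group of order p^3 is isomorphic either to the Heisenberg group Heis(p) or to the semidirect product M(p); in other words, up to isomorphism there are precisely two nonabelian groups of order p^3. -/
/-- The Heisenberg group: upper unitriangular 3×3 matrices over `ZMod p`. -/
def Heis (p : ℕ) : Type :=
  {M : Matrix (Fin 3) (Fin 3) (ZMod p) //
    M 0 0 = 1 ∧ M 1 1 = 1 ∧ M 2 2 = 1 ∧ M 1 0 = 0 ∧ M 2 0 = 0 ∧ M 2 1 = 0}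

namespace Heis

variable {p : ℕ}

instance : Mul (Heis p) :=
  ⟨fun M N => ⟨M.1 * N.1, by
    obtain ⟨a1, a2, a3, a4, a5, a6⟩ := M.2
    obtain ⟨b1, b2, b3, b4, b5, b6⟩ := N.2
    refine ⟨?_, ?_, ?_, ?_, ?_, ?_⟩ <;>
      simp [Matrix.mul_apply, Fin.sum_univ_three, a1, a2, a3, a4, a5, a6,
        b1, b2, b3, b4, b5, b6]⟩⟩

instance : One (Heis p) :=
  ⟨⟨1, by refine ⟨?_, ?_, ?_, ?_, ?_, ?_⟩ <;> simp [Matrix.one_apply]⟩⟩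

instance : Inv (Heis p) :=
  ⟨fun M => ⟨!![1, -(M.1 0 1), M.1 0 1 * M.1 1 2 - M.1 0 2;
               0, 1, -(M.1 1 2);
               0, 0, 1], by
    refine ⟨?_, ?_, ?_, ?_, ?_, ?_⟩ <;>
      simp [Matrix.cons_val_zero, Matrix.cons_val_one, Matrix.head_cons,
        Matrix.vecHead, Matrix.vecTail]⟩⟩

theorem mul_val (M N : Heis p) : (M * N).1 = M.1 * N.1 := rfl

theorem one_val : ((1 : Heis p)).1 = 1 := rfl

theorem inv_val (M : Heis p) :
    (M⁻¹).1 = !![1, -(M.1 0 1), M.1 0 1 * M.1 1 2 - M.1 0 2;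
                 0, 1, -(M.1 1 2);
                 0, 0, 1] := rfl

instance : Group (Heis p) :=
  Group.ofLeftAxioms
    (fun M N K => Subtype.ext (by rw [mul_val, mul_val, mul_val, mul_val, mul_assoc]))
    (fun M => Subtype.ext (by rw [mul_val, one_val, one_mul]))
    (fun M => by
      apply Subtype.ext
      rw [mul_val, inv_val, one_val]
      obtain ⟨M, a1, a2, a3, a4, a5, a6⟩ := M
      ext i j
      fin_cases i <;> fin_cases j <;>
        simp [Matrix.mul_apply, Fin.sum_univ_three, Matrix.one_apply,
          a1, a2, a3, a4, a5, a6] <;> ring)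

end Heis

/-- Underlying carrier of the group `M(p) = (ZMod p²) ⋊ (ZMod p)`. -/
@[ext]
structure Mp (p : ℕ) where
  fst : ZMod (p ^ 2)
  snd : ZMod p

namespace Mp

/-- The action constant: `k : ZMod p` acts on `ZMod p²` by multiplication by `(1+p)^k`. -/
def e (p : ℕ) (k : ZMod p) : ZMod (p ^ 2) := (1 + (p : ZMod (p ^ 2))) ^ k.val

theorem sq_zero_pow {R : Type*} [CommRing R] (x : R) (h : x * x = 0) :
    ∀ n : ℕ, (1 + x) ^ n = 1 + (n : R) * x := by
  intro n
  induction n with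
  | zero => simp
  | succ n ih =>
    rw [pow_succ, ih]
    push_cast
    linear_combination ((n : R)) * h

theorem p_sq_zero (p : ℕ) : ((p : ZMod (p ^ 2))) * (p : ZMod (p ^ 2)) = 0 := by
  have : (((p ^ 2 : ℕ)) : ZMod (p ^ 2)) = 0 := ZMod.natCast_self _
  push_cast at this
  linear_combination this

theorem one_add_p_pow_p (p : ℕ) : (1 + (p : ZMod (p ^ 2))) ^ p = 1 := by
  rw [sq_zero_pow _ (p_sq_zero p) p]
  have := p_sq_zero p
  linear_combination this

theorem pow_val_mod (p m : ℕ) : (1 + (p : ZMod (p ^ 2))) ^ m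
    = (1 + (p : ZMod (p ^ 2))) ^ (m % p) := by
  conv_lhs => rw [← Nat.div_add_mod m p]
  rw [pow_add, pow_mul, one_add_p_pow_p, one_pow, one_mul]

theorem e_add (p : ℕ) (k l : ZMod p) : e p (k + l) = e p k * e p l := by
  rcases p with _ | n
  · simp [e]
  · rw [e, e, e, ← pow_add, ZMod.val_add, ← pow_val_mod]



instance {p : ℕ} : Mul (Mp p) :=
  ⟨fun x y => ⟨x.fst + e p x.snd * y.fst, x.snd + y.snd⟩⟩

instance {p : ℕ} : One (Mp p) := ⟨⟨0, 0⟩⟩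

instance {p : ℕ} : Inv (Mp p) := ⟨fun x => ⟨-(e p (-x.snd) * x.fst), -x.snd⟩⟩

theorem mul_def {p : ℕ} (x y : Mp p) :
    x * y = ⟨x.fst + e p x.snd * y.fst, x.snd + y.snd⟩ := rfl

theorem one_def {p : ℕ} : (1 : Mp p) = ⟨0, 0⟩ := rfl

theorem inv_def {p : ℕ} (x : Mp p) : x⁻¹ = ⟨-(e p (-x.snd) * x.fst), -x.snd⟩ := rfl

instance {p : ℕ} : Group (Mp p) :=
  Group.ofLeftAxioms
    (fun x y z => by
      simp only [mul_def, e_add]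
      ext <;> dsimp <;> ring)
    (fun x => by
      ext <;> simp [mul_def, one_def, e])
    (fun x => by
      ext <;> simp [mul_def, inv_def, one_def])

end Mp

section Aux
variable {H : Type*} [Group H]

lemma comm_left {x y : H} (h : Commute x y) (z : H) : x * (y * z) = y * (x * z) := by
  rw [← mul_assoc, h.eq, mul_assoc]

lemma aux_pow_mul {a b c : H} (hab : a * b = c * b * a) (hca : Commute c a) :
    ∀ m : ℕ, a ^ m * b = c ^ m * b * a ^ m := by
  intro m
  induction m with
  | zero => simp
  | succ m ih =>
    calc a ^ (m + 1) * b = a * (a ^ m * b) := by rw [pow_succ']; rw [mul_assoc]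
    _ = a * (c ^ m * b * a ^ m) := by rw [ih]
    _ = (a * c ^ m) * b * a ^ m := by simp only [mul_assoc]
    _ = (c ^ m * a) * b * a ^ m := by rw [(hca.pow_left m).eq]
    _ = c ^ m * (a * b) * a ^ m := by simp only [mul_assoc]
    _ = c ^ m * (c * b * a) * a ^ m := by rw [hab]
    _ = (c ^ m * c) * b * (a * a ^ m) := by simp only [mul_assoc]
    _ = c ^ (m + 1) * b * a ^ (m + 1) := by rw [← pow_succ, ← pow_succ']

lemma aux_pow_pow {a b c : H} (hab : a * b = c * b * a) (hca : Commute c a) (hcb : Commute c b) :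
    ∀ m n : ℕ, a ^ m * b ^ n = c ^ (m * n) * b ^ n * a ^ m := by
  intro m n
  induction n with
  | zero => simp
  | succ n ih =>
    calc a ^ m * b ^ (n + 1) = (a ^ m * b ^ n) * b := by rw [pow_succ, ← mul_assoc]
    _ = (c ^ (m * n) * b ^ n * a ^ m) * b := by rw [ih]
    _ = c ^ (m * n) * (b ^ n * (a ^ m * b)) := by simp only [mul_assoc]
    _ = c ^ (m * n) * (b ^ n * (c ^ m * b * a ^ m)) := by rw [aux_pow_mul hab hca m]
    _ = c ^ (m * n) * ((b ^ n * c ^ m) * (b * a ^ m)) := by simp only [mul_assoc]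
    _ = c ^ (m * n) * ((c ^ m * b ^ n) * (b * a ^ m)) := by rw [(hcb.pow_pow m n).eq]
    _ = (c ^ (m * n) * c ^ m) * ((b ^ n * b) * a ^ m) := by simp only [mul_assoc]
    _ = c ^ (m * (n + 1)) * (b ^ (n + 1) * a ^ m) := by
        rw [← pow_add, ← pow_succ, Nat.mul_succ]
    _ = c ^ (m * (n + 1)) * b ^ (n + 1) * a ^ m := by rw [mul_assoc]

lemma choose_two_succ (n : ℕ) : n.choose 2 + n = (n + 1).choose 2 := by
  have h := Nat.choose_succ_succ n 1
  norm_num at h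
  omega

lemma aux_mul_pow {a b c : H} (hab : a * b = c * b * a) (hca : Commute c a) (hcb : Commute c b) :
    ∀ n : ℕ, (b * a) ^ n = c ^ n.choose 2 * b ^ n * a ^ n := by
  intro n
  induction n with
  | zero => simp
  | succ n ih =>
    calc (b * a) ^ (n + 1) = (b * a) ^ n * (b * a) := by rw [pow_succ]
    _ = c ^ n.choose 2 * b ^ n * a ^ n * (b * a) := by rw [ih]
    _ = c ^ n.choose 2 * b ^ n * (a ^ n * b) * a := by simp only [mul_assoc]
    _ = c ^ n.choose 2 * b ^ n * (c ^ n * b * a ^ n) * a := by rw [aux_pow_mul hab hca n]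
    _ = c ^ n.choose 2 * (b ^ n * c ^ n) * (b * (a ^ n * a)) := by simp only [mul_assoc]
    _ = c ^ n.choose 2 * (c ^ n * b ^ n) * (b * (a ^ n * a)) := by rw [(hcb.pow_pow n n).eq]
    _ = (c ^ n.choose 2 * c ^ n) * (b ^ n * b) * (a ^ n * a) := by simp only [mul_assoc]
    _ = c ^ (n + 1).choose 2 * b ^ (n + 1) * a ^ (n + 1) := by
        rw [← pow_add, ← pow_succ, ← pow_succ, choose_two_succ]

lemma pow_eq_of_zmod_eq {g : H} {n : ℕ} (h : g ^ n = 1) {s t : ℕ}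
    (hst : (s : ZMod n) = (t : ZMod n)) : g ^ s = g ^ t :=
  pow_eq_pow_iff_modEq.mpr (((ZMod.natCast_eq_natCast_iff s t n).mp hst).of_dvd
    (orderOf_dvd_of_pow_eq_one h))

lemma subgroup_mem_of_pow_mem {A : Subgroup H} {g : H} {k n : ℕ} (hk : Nat.Coprime k n)
    (h1 : g ^ k ∈ A) (h2 : g ^ n ∈ A) : g ∈ A := by
  have hb := Nat.gcd_eq_gcd_ab k n
  rw [hk.gcd_eq_one] at hb
  push_cast at hb
  have hg : g = (g ^ k) ^ Nat.gcdA k n * (g ^ n) ^ Nat.gcdB k n := by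
    rw [← zpow_natCast g k, ← zpow_natCast g n, ← zpow_mul, ← zpow_mul, ← zpow_add, ← hb,
      zpow_one]
  rw [hg]
  exact A.mul_mem (A.zpow_mem h1 _) (A.zpow_mem h2 _)

lemma aux_conj_pow {a b : H} {r : ℕ} (h : b * a = a ^ r * b) :
    ∀ k m : ℕ, b ^ k * a ^ m = a ^ (m * r ^ k) * b ^ k := by
  have h1 : ∀ m : ℕ, b * a ^ m = a ^ (m * r) * b := by
    intro m
    induction m with
    | zero => simp
    | succ m ih =>
      calc b * a ^ (m + 1) = (b * a ^ m) * a := by rw [pow_succ, mul_assoc]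
      _ = a ^ (m * r) * (b * a) := by rw [ih, mul_assoc]
      _ = a ^ (m * r) * (a ^ r * b) := by rw [h]
      _ = a ^ ((m + 1) * r) * b := by rw [← mul_assoc, ← pow_add, Nat.succ_mul]
  intro k
  induction k with
  | zero => intro m; simp
  | succ k ih =>
    intro m
    calc b ^ (k + 1) * a ^ m = b ^ k * (b * a ^ m) := by rw [pow_succ, mul_assoc]
    _ = b ^ k * (a ^ (m * r) * b) := by rw [h1]
    _ = (b ^ k * a ^ (m * r)) * b := by rw [mul_assoc]
    _ = a ^ (m * r * r ^ k) * b ^ k * b := by rw [ih]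
    _ = a ^ (m * r ^ (k + 1)) * b ^ (k + 1) := by
        rw [mul_assoc, ← pow_succ]
        congr 2
        rw [pow_succ]
        ring

lemma mp_mul_aux {a b : H} {r : ℕ} (h : b * a = a ^ r * b) (x₁ k₁ x₂ k₂ : ℕ) :
    a ^ (x₁ + x₂ * r ^ k₁) * b ^ (k₁ + k₂) = (a ^ x₁ * b ^ k₁) * (a ^ x₂ * b ^ k₂) := by
  calc a ^ (x₁ + x₂ * r ^ k₁) * b ^ (k₁ + k₂)
      = a ^ x₁ * (a ^ (x₂ * r ^ k₁) * b ^ k₁) * b ^ k₂ := by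
        rw [pow_add, pow_add]; simp only [mul_assoc]
    _ = a ^ x₁ * (b ^ k₁ * a ^ x₂) * b ^ k₂ := by rw [aux_conj_pow h k₁ x₂]
    _ = (a ^ x₁ * b ^ k₁) * (a ^ x₂ * b ^ k₂) := by simp only [mul_assoc]

lemma heis_mul_aux {a b c : H} (hab : a * b = c * b * a) (hca : Commute c a) (hcb : Commute c b)
    (x₁ y₁ z₁ x₂ y₂ z₂ : ℕ) :
    b ^ (y₁ + y₂) * a ^ (x₁ + x₂) * c ^ (z₁ + z₂ + x₁ * y₂) =
      (b ^ y₁ * a ^ x₁ * c ^ z₁) * (b ^ y₂ * a ^ x₂ * c ^ z₂) := by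
  symm
  calc (b ^ y₁ * a ^ x₁ * c ^ z₁) * (b ^ y₂ * a ^ x₂ * c ^ z₂)
      = b ^ y₁ * a ^ x₁ * ((c ^ z₁ * b ^ y₂) * (a ^ x₂ * c ^ z₂)) := by simp only [mul_assoc]
    _ = b ^ y₁ * a ^ x₁ * ((b ^ y₂ * c ^ z₁) * (a ^ x₂ * c ^ z₂)) := by
        rw [(hcb.pow_pow z₁ y₂).eq]
    _ = b ^ y₁ * ((a ^ x₁ * b ^ y₂) * ((c ^ z₁ * a ^ x₂) * c ^ z₂)) := by simp only [mul_assoc]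
    _ = b ^ y₁ * ((a ^ x₁ * b ^ y₂) * ((a ^ x₂ * c ^ z₁) * c ^ z₂)) := by
        rw [(hca.pow_pow z₁ x₂).eq]
    _ = b ^ y₁ * ((c ^ (x₁ * y₂) * b ^ y₂ * a ^ x₁) * ((a ^ x₂ * c ^ z₁) * c ^ z₂)) := by
        rw [aux_pow_pow hab hca hcb x₁ y₂]
    _ = (b ^ y₁ * c ^ (x₁ * y₂)) * (b ^ y₂ * ((a ^ x₁ * a ^ x₂) * (c ^ z₁ * c ^ z₂))) := by
        simp only [mul_assoc]
    _ = (c ^ (x₁ * y₂) * b ^ y₁) * (b ^ y₂ * ((a ^ x₁ * a ^ x₂) * (c ^ z₁ * c ^ z₂))) := by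
        rw [(hcb.pow_pow (x₁ * y₂) y₁).eq]
    _ = c ^ (x₁ * y₂) * ((b ^ y₁ * b ^ y₂) * ((a ^ x₁ * a ^ x₂) * (c ^ z₁ * c ^ z₂))) := by
        simp only [mul_assoc]
    _ = c ^ (x₁ * y₂) * (b ^ (y₁ + y₂) * (a ^ (x₁ + x₂) * c ^ (z₁ + z₂))) := by
        rw [← pow_add, ← pow_add, ← pow_add]
    _ = b ^ (y₁ + y₂) * (c ^ (x₁ * y₂) * (a ^ (x₁ + x₂) * c ^ (z₁ + z₂))) := by
        rw [comm_left (hcb.pow_pow (x₁ * y₂) (y₁ + y₂))]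
    _ = b ^ (y₁ + y₂) * (a ^ (x₁ + x₂) * (c ^ (x₁ * y₂) * c ^ (z₁ + z₂))) := by
        rw [comm_left (hca.pow_pow (x₁ * y₂) (x₁ + x₂))]
    _ = b ^ (y₁ + y₂) * a ^ (x₁ + x₂) * c ^ (z₁ + z₂ + x₁ * y₂) := by
        rw [← pow_add, ← mul_assoc]
        congr 2
        omega

end Aux

lemma monoidhom_inj {G₁ G₂ : Type*} [Group G₁] [Group G₂] (F : G₁ →* G₂)
    (h : ∀ x, F x = 1 → x = 1) : Function.Injective F :=
  (injective_iff_map_eq_one F).mpr h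
def heisEquiv (p : ℕ) : Heis p ≃ ZMod p × ZMod p × ZMod p where
  toFun M := (M.1 0 1, M.1 1 2, M.1 0 2)
  invFun t := ⟨!![1, t.1, t.2.2; 0, 1, t.2.1; 0, 0, 1], by
    refine ⟨?_, ?_, ?_, ?_, ?_, ?_⟩ <;> simp [Matrix.vecHead, Matrix.vecTail]⟩
  left_inv M := by
    obtain ⟨M, h1, h2, h3, h4, h5, h6⟩ := M
    apply Subtype.ext
    dsimp only
    ext i j
    fin_cases i <;> fin_cases j <;> simp [h1, h2, h3, h4, h5, h6, Matrix.vecHead, Matrix.vecTail]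
  right_inv t := by simp

lemma card_heis (p : ℕ) : Nat.card (Heis p) = p ^ 3 := by
  rw [Nat.card_congr (heisEquiv p), Nat.card_prod, Nat.card_prod, Nat.card_zmod]
  ring

def mpEquiv (p : ℕ) : Mp p ≃ ZMod (p ^ 2) × ZMod p where
  toFun x := (x.fst, x.snd)
  invFun y := ⟨y.1, y.2⟩
  left_inv x := rfl
  right_inv y := rfl

lemma card_mp (p : ℕ) : Nat.card (Mp p) = p ^ 3 := by
  rw [Nat.card_congr (mpEquiv p), Nat.card_prod, Nat.card_zmod, Nat.card_zmod]
  ring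

lemma heis_entries {p : ℕ} (M N : Heis p) :
    (M * N).1 0 1 = M.1 0 1 + N.1 0 1 ∧
    (M * N).1 1 2 = M.1 1 2 + N.1 1 2 ∧
    (M * N).1 0 2 = M.1 0 2 + N.1 0 2 + M.1 0 1 * N.1 1 2 := by
  obtain ⟨hM1, hM2, hM3, hM4, hM5, hM6⟩ := M.2
  obtain ⟨hN1, hN2, hN3, hN4, hN5, hN6⟩ := N.2
  refine ⟨?_, ?_, ?_⟩ <;>
    · rw [Heis.mul_val, Matrix.mul_apply, Fin.sum_univ_three]
      simp [hM1, hM2, hM3, hM4, hM5, hM6, hN1, hN2, hN3, hN4, hN5, hN6]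
      ring

lemma heis_eq_one {p : ℕ} (M : Heis p) (h1 : M.1 0 1 = 0) (h2 : M.1 1 2 = 0)
    (h3 : M.1 0 2 = 0) : M = 1 := by
  obtain ⟨M, hM1, hM2, hM3, hM4, hM5, hM6⟩ := M
  apply Subtype.ext
  show M = 1
  ext i j
  fin_cases i <;> fin_cases j <;>
    simp_all [Matrix.one_apply, Matrix.vecHead, Matrix.vecTail]

open scoped commutatorElement

/-- For an odd prime `p`, every nonabelian group of order `p^3` is
isomorphic either to the Heisenberg group `Heis p` or to the semidirect product `Mp p`;
in other words, up to isomorphism there are precisely two nonabelian groups of order `p^3`. -/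
theorem nonabelian_group_of_order_p_cubed_classification
    (p : ℕ) [Fact p.Prime] (hp : Odd p)
    (G : Type*) [Group G] (hcard : Nat.card G = p ^ 3)
    (hna : ¬ ∀ a b : G, a * b = b * a) :
    Nonempty (G ≃* Heis p) ∨ Nonempty (G ≃* Mp p) := by
  have hp2 : p.Prime := Fact.out
  haveI : NeZero p := ⟨hp2.ne_zero⟩
  haveI : NeZero (p ^ 2) := ⟨pow_ne_zero 2 hp2.ne_zero⟩
  have hp1 : 1 < p := hp2.one_lt
  haveI hfin : Finite G := Nat.finite_of_card_ne_zero (by rw [hcard]; positivity)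
  haveI : Nontrivial G := by
    rw [← Finite.one_lt_card_iff_nontrivial, hcard]
    exact Nat.one_lt_pow (by omega) hp1
  have hpg : IsPGroup p G := IsPGroup.of_card hcard
  set Z := Subgroup.center G with hZdef
  have habelian : IsCyclic (G ⧸ Z) → False := by
    intro h
    exact hna (commutative_of_cyclic_center_quotient (QuotientGroup.mk' Z)
      (by rw [QuotientGroup.ker_mk']))
  -- |Z| = p
  have hZcard : Nat.card Z = p := by
    obtain ⟨k, hk3, hZk⟩ := (Nat.dvd_prime_pow hp2).mp
      (hcard ▸ Subgroup.card_subgroup_dvd_card Z)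
    interval_cases k
    · exfalso
      haveI := IsPGroup.center_nontrivial hpg
      have h1 := (Finite.one_lt_card_iff_nontrivial (α := Z)).mpr this
      rw [pow_zero] at hZk
      omega
    · simpa using hZk
    · exfalso
      apply habelian
      have h1 := Subgroup.card_mul_index Z
      rw [hZk, hcard] at h1
      have hidx : Z.index = p := by
        have h2 : p ^ 2 * p = p ^ 3 := by ring
        exact Nat.eq_of_mul_eq_mul_left (by positivity) (h1.trans h2.symm)
      exact isCyclic_of_prime_card (by rw [← Subgroup.index_eq_card, hidx])
    · exfalso
      apply hna
      have hZtop : Z = ⊤ := Subgroup.eq_top_of_card_eq _ (by rw [hZk, hcard])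
      intro x y
      have : y ∈ Z := hZtop ▸ Subgroup.mem_top y
      exact Subgroup.mem_center_iff.mp this x
  -- z^p = 1 for z central
  have hzp : ∀ z ∈ Z, z ^ p = 1 := by
    intro z hz
    have h1 : (⟨z, hz⟩ : Z) ^ p = 1 := by
      apply orderOf_dvd_iff_pow_eq_one.mp
      rw [← hZcard]
      exact orderOf_dvd_natCard _
    simpa [Subtype.ext_iff] using h1
  -- commute helper
  have hcomm : ∀ w : G, w ∈ Z → ∀ x : G, Commute w x := by
    intro w hw x
    exact (Subgroup.mem_center_iff.mp hw x).symm
  -- card of quotient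
  haveI : Finite (G ⧸ Z) := Quotient.finite _
  have hQcard : Nat.card (G ⧸ Z) = p ^ 2 := by
    have h1 := Subgroup.card_mul_index Z
    rw [hZcard, hcard] at h1
    have h2 : p * p ^ 2 = p ^ 3 := by ring
    rw [← Subgroup.index_eq_card]
    exact Nat.eq_of_mul_eq_mul_left (by positivity) (h1.trans h2.symm)
  -- commutators are central
  have hcommZ : ∀ x y : G, ⁅x, y⁆ ∈ Z := by
    intro x y
    have hcq := IsPGroup.commutative_of_card_eq_prime_sq hQcard
    apply (QuotientGroup.eq_one_iff _).mp
    have h1 : ((⁅x, y⁆ : G) : G ⧸ Z) = ⁅(x : G ⧸ Z), (y : G ⧸ Z)⁆ := rfl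
    rw [h1, commutatorElement_eq_one_iff_mul_comm]
    exact hcq _ _
  -- p-th powers are central
  have hgpZ : ∀ g : G, g ^ p ∈ Z := by
    intro g
    have hq : orderOf (g : G ⧸ Z) ∣ p ^ 2 := hQcard ▸ orderOf_dvd_natCard _
    obtain ⟨j, hj2, hqj⟩ := (Nat.dvd_prime_pow hp2).mp hq
    have hqp : ((g : G ⧸ Z)) ^ p = 1 := by
      rcases Nat.lt_or_ge j 2 with hlt | hge
      · apply orderOf_dvd_iff_pow_eq_one.mp
        rw [hqj]
        have hd : p ^ j ∣ p ^ 1 := pow_dvd_pow p (by omega)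
        simpa using hd
      · exfalso
        apply habelian
        have hj : j = 2 := by omega
        subst hj
        exact isCyclic_of_orderOf_eq_card (g : G ⧸ Z) (by rw [hqj, hQcard])
    apply (QuotientGroup.eq_one_iff _).mp
    exact hqp
  -- p-th power of product
  have hpowmul : ∀ x y : G, (x * y) ^ p = x ^ p * y ^ p := by
    intro x y
    have hcZ : ⁅y, x⁆ ∈ Z := hcommZ y x
    have hrel : y * x = ⁅y, x⁆ * x * y := by group
    have hkey := aux_mul_pow hrel (hcomm _ hcZ y) (hcomm _ hcZ x) p
    have hcp : ⁅y, x⁆ ^ p = 1 := hzp _ hcZ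
    have hchoose : p.choose 2 = p * ((p - 1) / 2) := by
      rw [Nat.choose_two_right]
      exact Nat.mul_div_assoc p (by obtain ⟨m, hm⟩ := hp; omega)
    rw [hkey, hchoose, pow_mul, hcp, one_pow, one_mul]
  by_cases hexp : ∀ g : G, g ^ p = 1
  · ------------------------------------------------------------------
    -- CASE 1 : exponent p, G ≃* Heis p
    left
    push_neg at hna
    obtain ⟨a, b, hab⟩ := hna
    have hc1 : ⁅a, b⁆ ≠ 1 := fun h => hab (commutatorElement_eq_one_iff_mul_comm.mp h)
    set c := ⁅a, b⁆ with hcdef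
    have hcZ : c ∈ Z := hcommZ a b
    have hrel : a * b = c * b * a := by rw [hcdef]; group
    have hca : Commute c a := hcomm c hcZ a
    have hcb : Commute c b := hcomm c hcZ b
    have horder : orderOf c = p := by
      rcases hp2.eq_one_or_self_of_dvd _ (orderOf_dvd_of_pow_eq_one (hexp c)) with h | h
      · exact absurd (orderOf_eq_one_iff.mp h) hc1
      · exact h
    have hvc : ∀ u : ZMod p, ((u.val : ℕ) : ZMod p) = u := by
      intro u; simp [ZMod.natCast_val, ZMod.cast_id]
    let f : Heis p → G := fun M => b ^ (M.1 1 2).val * a ^ (M.1 0 1).val * c ^ (M.1 0 2).val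
    have hf_mul : ∀ M N : Heis p, f (M * N) = f M * f N := by
      intro M N
      obtain ⟨e1, e2, e3⟩ := heis_entries M N
      show b ^ ((M * N).1 1 2).val * a ^ ((M * N).1 0 1).val * c ^ ((M * N).1 0 2).val = _
      rw [e1, e2, e3]
      rw [show b ^ ((M.1 1 2 + N.1 1 2).val) = b ^ ((M.1 1 2).val + (N.1 1 2).val) from
          pow_eq_of_zmod_eq (hexp b) (by push_cast [hvc]; ring)]
      rw [show a ^ ((M.1 0 1 + N.1 0 1).val) = a ^ ((M.1 0 1).val + (N.1 0 1).val) from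
          pow_eq_of_zmod_eq (hexp a) (by push_cast [hvc]; ring)]
      rw [show c ^ ((M.1 0 2 + N.1 0 2 + M.1 0 1 * N.1 1 2).val)
            = c ^ ((M.1 0 2).val + (N.1 0 2).val + (M.1 0 1).val * (N.1 1 2).val) from
          pow_eq_of_zmod_eq (hexp c) (by push_cast [hvc]; ring)]
      exact heis_mul_aux hrel hca hcb _ _ _ _ _ _
    have hval0 : ∀ (x : G) (u : ZMod p), x ^ p = 1 → x ^ u.val = 1 → orderOf x = p → u = 0 := by
      intro x u hxp hxu hox
      have h1 : p ∣ u.val := by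
        have h1' := orderOf_dvd_of_pow_eq_one hxu
        rwa [hox] at h1'
      have h2 : u.val < p := ZMod.val_lt u
      exact (ZMod.val_eq_zero u).mp (Nat.eq_zero_of_dvd_of_lt h1 h2)
    have hf_inj : ∀ M : Heis p, f M = 1 → M = 1 := by
      intro M hM
      have hM' : b ^ (M.1 1 2).val * a ^ (M.1 0 1).val * c ^ (M.1 0 2).val = 1 := hM
      set x := (M.1 0 1).val with hx
      set y := (M.1 1 2).val with hy
      set z := (M.1 0 2).val with hz
      -- step 1 : y = 0
      have hbyv : b ^ y = (a ^ x * c ^ z)⁻¹ := by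
        apply eq_inv_of_mul_eq_one_left
        rw [← mul_assoc]; exact hM'
      have hcomm_a : Commute a (b ^ y) := by
        rw [hbyv]
        exact (((Commute.refl a).pow_right x).mul_right (hca.symm.pow_right z)).inv_right
      have h5 : a * b ^ y = c ^ y * (b ^ y * a) := by
        have h6 := aux_pow_pow hrel hca hcb 1 y
        simpa [mul_assoc] using h6
      have hcy : c ^ y = 1 := by
        apply mul_eq_right.mp
        rw [← h5, hcomm_a.eq]
      have hy0 : M.1 1 2 = 0 := hval0 c _ (hexp c) hcy horder
      -- step 2 : x = 0
      have hyv0 : y = 0 := by rw [hy]; rw [hy0]; exact ZMod.val_zero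
      have hM2 : a ^ x * c ^ z = 1 := by
        rw [hyv0] at hM'; simpa using hM'
      have haxv : a ^ x = (c ^ z)⁻¹ := eq_inv_of_mul_eq_one_left hM2
      have hcomm_b : Commute (a ^ x) b := by
        rw [haxv]; exact (hcb.pow_left z).inv_left
      have h7 : a ^ x * b = c ^ x * (b * a ^ x) := by
        have h8 := aux_pow_pow hrel hca hcb x 1
        simpa [mul_assoc] using h8
      have hcx : c ^ x = 1 := by
        apply mul_eq_right.mp
        rw [← h7, hcomm_b.eq]
      have hx0 : M.1 0 1 = 0 := hval0 c _ (hexp c) hcx horder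
      -- step 3 : z = 0
      have hxv0 : x = 0 := by rw [hx]; rw [hx0]; exact ZMod.val_zero
      have hcz : c ^ z = 1 := by rw [hxv0] at hM2; simpa using hM2
      have hz0 : M.1 0 2 = 0 := hval0 c _ (hexp c) hcz horder
      exact heis_eq_one M hx0 hy0 hz0
    let F : Heis p →* G :=
      { toFun := f
        map_one' := by
          show b ^ ((1 : Heis p).1 1 2).val * a ^ ((1 : Heis p).1 0 1).val
              * c ^ ((1 : Heis p).1 0 2).val = 1
          rw [Heis.one_val]
          simp [Matrix.one_apply]
        map_mul' := hf_mul }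
    have hinj : Function.Injective F := monoidhom_inj F hf_inj
    have hbij : Function.Bijective F :=
      (Nat.bijective_iff_injective_and_card F).mpr ⟨hinj, by rw [card_heis, hcard]⟩
    exact ⟨(MulEquiv.ofBijective F hbij).symm⟩
  · ------------------------------------------------------------------
    -- CASE 2 : some element of order p², G ≃* Mp p
    right
    push_neg at hexp
    obtain ⟨a, hap⟩ := hexp
    have hapZ : a ^ p ∈ Z := hgpZ a
    have hap2 : a ^ p ^ 2 = 1 := by
      have h1 : (a ^ p) ^ p = 1 := hzp _ hapZ
      rw [← pow_mul] at h1
      rw [show p ^ 2 = p * p from by ring]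
      exact h1
    have horder_a : orderOf a = p ^ 2 := by
      obtain ⟨j, hj, hja⟩ := (Nat.dvd_prime_pow hp2).mp (orderOf_dvd_of_pow_eq_one hap2)
      interval_cases j
      · have ha1 : a = 1 := orderOf_eq_one_iff.mp (by simpa using hja)
        exact absurd (by rw [ha1, one_pow]) hap
      · have hd : orderOf a ∣ p := by rw [hja]; simp
        exact absurd (orderOf_dvd_iff_pow_eq_one.mp hd) hap
      · exact hja
    set A := Subgroup.zpowers a with hAdef
    have hAcard : Nat.card A = p ^ 2 := by rw [hAdef, Nat.card_zpowers, horder_a]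
    have hordc0 : orderOf (a ^ p) = p := by
      rcases hp2.eq_one_or_self_of_dvd _
          (orderOf_dvd_of_pow_eq_one (hzp _ hapZ)) with h | h
      · exact absurd (orderOf_eq_one_iff.mp h) hap
      · exact h
    have hZeq : Z = Subgroup.zpowers (a ^ p) := by
      symm
      apply Subgroup.eq_of_le_of_card_ge (Subgroup.zpowers_le.mpr hapZ)
      rw [hZcard, Nat.card_zpowers, hordc0]
    have hZA : Subgroup.zpowers (a ^ p) ≤ A :=
      Subgroup.zpowers_le.mpr (A.pow_mem (Subgroup.mem_zpowers a) p)
    -- elements outside A do not commute with a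
    have hnc : ∀ g : G, g ∉ A → g * a ≠ a * g := by
      intro g hgA hcm
      set C := Subgroup.centralizer {a} with hCdef
      have hAC : A ≤ C := by
        rw [hAdef, Subgroup.zpowers_le]
        exact Subgroup.mem_centralizer_iff.mpr (by rintro y rfl; rfl)
      have hgC : g ∈ C := Subgroup.mem_centralizer_iff.mpr (by rintro y rfl; exact hcm.symm)
      obtain ⟨j, hj3, hCj⟩ := (Nat.dvd_prime_pow hp2).mp
        (hcard ▸ Subgroup.card_subgroup_dvd_card C)
      have hACcard : p ^ 2 ∣ Nat.card C := hAcard ▸ Subgroup.card_dvd_of_le hAC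
      have hj2 : 2 ≤ j := by
        rw [hCj] at hACcard
        exact (Nat.pow_dvd_pow_iff_le_right hp1).mp hACcard
      interval_cases j
      · have hACeq : A = C := Subgroup.eq_of_le_of_card_ge hAC (by rw [hAcard, hCj])
        exact hgA (hACeq ▸ hgC)
      · have hCtop : C = ⊤ := Subgroup.eq_top_of_card_eq _ (by rw [hCj, hcard])
        have haZ : a ∈ Z := by
          apply Subgroup.mem_center_iff.mpr
          intro g'
          have hg' : g' ∈ C := hCtop ▸ Subgroup.mem_top g'
          exact (Subgroup.mem_centralizer_iff.mp hg' a rfl).symm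
        exact hap (hzp a haZ)
    -- pick g outside A
    obtain ⟨g, hgA⟩ : ∃ g : G, g ∉ A := by
      by_contra h
      push_neg at h
      have hAtop : A = ⊤ := (Subgroup.eq_top_iff' A).mpr h
      have h23 : p ^ 2 < p ^ 3 := Nat.pow_lt_pow_right hp1 (by omega)
      rw [hAtop, Subgroup.card_top, hcard] at hAcard
      omega
    obtain ⟨s, hs⟩ : ∃ s : ℕ, ⁅g, a⁆ = (a ^ p) ^ s := by
      have h1 : ⁅g, a⁆ ∈ Subgroup.zpowers (a ^ p) := hZeq ▸ hcommZ g a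
      obtain ⟨s, hs⟩ := mem_powers_iff_mem_zpowers.mpr h1
      exact ⟨s, hs.symm⟩
    have hczm : ∀ m : ℕ, (a ^ p) ^ m ∈ Z := fun m => hZeq ▸ Subgroup.pow_mem _ (Subgroup.mem_zpowers _) m
    have hrel_g : g * a = (a ^ p) ^ s * a * g := by rw [← hs]; group
    have hps : ¬ (p ∣ s) := by
      rintro ⟨t, rfl⟩
      apply hnc g hgA
      apply commutatorElement_eq_one_iff_mul_comm.mp
      rw [hs, ← pow_mul, show p * (p * t) = p ^ 2 * t from by ring, pow_mul, hap2, one_pow]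
    have hsnz : (s : ZMod p) ≠ 0 := by
      rw [Ne, ZMod.natCast_eq_zero_iff]
      exact hps
    set k := ((s : ZMod p)⁻¹).val with hkdef
    have hsk : ((s * k : ℕ) : ZMod p) = ((1 : ℕ) : ZMod p) := by
      push_cast [hkdef, ZMod.natCast_val, ZMod.cast_id]
      field_simp
    have hc0p : (a ^ p) ^ p = 1 := hzp _ hapZ
    set h := g ^ k with hhdef
    have hrel_h : h * a = a ^ p * a * h := by
      have h1 : g ^ k * a = ((a ^ p) ^ s) ^ k * a * g ^ k :=
        aux_pow_mul hrel_g (hcomm _ (hczm s) g) k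
      rw [hhdef, h1, ← pow_mul]
      rw [show (a ^ p) ^ (s * k) = (a ^ p) ^ 1 from pow_eq_of_zmod_eq hc0p (by exact_mod_cast hsk)]
      rw [pow_one]
    have hknd : ¬ (p ∣ k) := by
      intro hd
      have h0 : ((k : ℕ) : ZMod p) = 0 := (ZMod.natCast_eq_zero_iff k p).mpr hd
      rw [hkdef, ZMod.natCast_val, ZMod.cast_id] at h0
      exact hsnz (inv_eq_zero.mp h0)
    have hhA : h ∉ A := by
      intro hh
      apply hgA
      refine subgroup_mem_of_pow_mem
        ((hp2.coprime_iff_not_dvd.mpr hknd).symm) hh ?_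
      exact hZA (hZeq ▸ hgpZ g)
    obtain ⟨u, hu⟩ : ∃ u : ℕ, h ^ p = (a ^ p) ^ u := by
      have h1 : h ^ p ∈ Subgroup.zpowers (a ^ p) := hZeq ▸ hgpZ h
      obtain ⟨u, hu⟩ := mem_powers_iff_mem_zpowers.mpr h1
      exact ⟨u, hu.symm⟩
    set b := h * (a ^ u)⁻¹ with hbdef
    have hbp : b ^ p = 1 := by
      have h1 : b ^ p = h ^ p * ((a ^ u) ^ p)⁻¹ := by rw [hbdef, hpowmul, inv_pow]
      rw [h1, hu, ← pow_mul, ← pow_mul, show u * p = p * u from by ring]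
      simp
    have hbA : b ∉ A := by
      intro hb
      apply hhA
      have hh2 : h = b * a ^ u := by rw [hbdef]; group
      rw [hh2]
      exact A.mul_mem hb (A.pow_mem (Subgroup.mem_zpowers a) u)
    have hrel_b : b * a = a ^ (p + 1) * b := by
      rw [hbdef]
      calc h * (a ^ u)⁻¹ * a = h * a * (a ^ u)⁻¹ := by
            rw [mul_assoc, ((Commute.refl a).pow_left u).inv_left.eq, ← mul_assoc]
      _ = a ^ p * a * h * (a ^ u)⁻¹ := by rw [hrel_h]
      _ = a ^ (p + 1) * (h * (a ^ u)⁻¹) := by rw [pow_succ]; simp only [mul_assoc]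
    have hva : ∀ w : ZMod (p ^ 2), ((w.val : ℕ) : ZMod (p ^ 2)) = w := by
      intro w; simp [ZMod.natCast_val, ZMod.cast_id]
    have hvb : ∀ w : ZMod p, ((w.val : ℕ) : ZMod p) = w := by
      intro w; simp [ZMod.natCast_val, ZMod.cast_id]
    let f : Mp p → G := fun M => a ^ M.fst.val * b ^ M.snd.val
    have hf_mul : ∀ M N : Mp p, f (M * N) = f M * f N := by
      intro M N
      show a ^ ((M.fst + Mp.e p M.snd * N.fst).val) * b ^ ((M.snd + N.snd).val) = _
      rw [show b ^ ((M.snd + N.snd).val) = b ^ (M.snd.val + N.snd.val) from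
          pow_eq_of_zmod_eq hbp (by push_cast [hvb]; ring)]
      rw [show a ^ ((M.fst + Mp.e p M.snd * N.fst).val)
            = a ^ (M.fst.val + N.fst.val * (p + 1) ^ M.snd.val) from
          pow_eq_of_zmod_eq hap2 (by
            simp only [Mp.e]
            push_cast [hva, hvb]
            ring)]
      exact mp_mul_aux hrel_b M.fst.val M.snd.val N.fst.val N.snd.val
    have hf_inj : ∀ M : Mp p, f M = 1 → M = 1 := by
      intro M hM
      have hM2 : a ^ M.fst.val * b ^ M.snd.val = 1 := hM
      have hsnd : M.snd = 0 := by
        by_contra hne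
        have h1 : b ^ M.snd.val = (a ^ M.fst.val)⁻¹ * (a ^ M.fst.val * b ^ M.snd.val) := by
          group
        rw [hM2, mul_one] at h1
        have hbk : b ^ M.snd.val ∈ A := by
          rw [h1]
          exact A.inv_mem (A.pow_mem (Subgroup.mem_zpowers a) _)
        apply hbA
        have hv0 : M.snd.val ≠ 0 := fun h0 => hne ((ZMod.val_eq_zero M.snd).mp h0)
        refine subgroup_mem_of_pow_mem
          (Nat.Coprime.symm (hp2.coprime_iff_not_dvd.mpr
            (fun hdvd => hv0 (Nat.eq_zero_of_dvd_of_lt hdvd (ZMod.val_lt M.snd)))))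
          hbk (by rw [hbp]; exact A.one_mem)
      have hfst : M.fst = 0 := by
        have h2 : a ^ M.fst.val = 1 := by
          rw [hsnd] at hM2
          simpa using hM2
        have h3 : p ^ 2 ∣ M.fst.val := by
          have h3' := orderOf_dvd_of_pow_eq_one h2
          rwa [horder_a] at h3'
        exact (ZMod.val_eq_zero _).mp (Nat.eq_zero_of_dvd_of_lt h3 (ZMod.val_lt M.fst))
      have hM1 : M = ⟨0, 0⟩ := Mp.ext hfst hsnd
      rw [hM1]; rfl
    let F : Mp p →* G :=
      { toFun := f
        map_one' := by
          show a ^ (0 : ZMod (p ^ 2)).val * b ^ (0 : ZMod p).val = 1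
          simp
        map_mul' := hf_mul }
    have hinj : Function.Injective F := monoidhom_inj F hf_inj
    have hbij : Function.Bijective F :=
      (Nat.bijective_iff_injective_and_card F).mpr ⟨hinj, by rw [card_mp, hcard]⟩
    exact ⟨(MulEquiv.ofBijective F hbij).symm⟩
end

section
/- Let p be an odd prime. The commutator (derived) subgroup of the group M(p) equals its center; in particular it is cyclic of order p, generated by (p, 0). -/
/-- The central element `c = (p, 0)` of the group `M(p)`. -/
def mpC (p : ℕ) : Mp p := ⟨(p : ZMod (p ^ 2)), (0 : ZMod p)⟩


open scoped commutatorElement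

section Aux

variable (p : ℕ)

theorem mp_e_eq (k : ZMod p) :
    Mp.e p k = 1 + (k.val : ZMod (p ^ 2)) * (p : ZMod (p ^ 2)) := by
  rw [Mp.e, Mp.sq_zero_pow _ (Mp.p_sq_zero p)]

theorem mp_e_zero [NeZero p] : Mp.e p 0 = 1 := by
  simp [Mp.e]

theorem mp_e_mul_e_neg (k : ZMod p) [NeZero p] :
    Mp.e p k * Mp.e p (-k) = 1 := by
  rw [← Mp.e_add, add_neg_cancel, mp_e_zero]

theorem mpC_pow [NeZero p] (n : ℕ) :
    mpC p ^ n = ⟨(p : ZMod (p ^ 2)) * (n : ZMod (p ^ 2)), 0⟩ := by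
  induction n with
  | zero => simp [Mp.one_def]
  | succ n ih =>
    rw [pow_succ, ih, Mp.mul_def]
    ext
    · dsimp
      rw [mp_e_zero]
      simp [mpC]
      ring
    · simp [mpC]

theorem mpC_zpow [NeZero p] (n : ℤ) :
    mpC p ^ n = ⟨(p : ZMod (p ^ 2)) * (n : ZMod (p ^ 2)), 0⟩ := by
  rcases n with m | m
  · rw [Int.ofNat_eq_natCast, zpow_natCast, mpC_pow]
    ext
    · push_cast
      ring
    · rfl
  · rw [Int.negSucc_eq, zpow_neg,
      show ((m : ℤ) + 1) = ((m + 1 : ℕ) : ℤ) by push_cast; ring,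
      zpow_natCast, mpC_pow, Mp.inv_def]
    ext
    · dsimp
      rw [neg_zero, mp_e_zero]
      push_cast
      ring
    · simp

theorem mem_zpowers_mpC_iff [NeZero p] (x : Mp p) :
    x ∈ Subgroup.zpowers (mpC p) ↔
      ∃ m : ZMod (p ^ 2), x = ⟨(p : ZMod (p ^ 2)) * m, 0⟩ := by
  constructor
  · rintro ⟨n, rfl⟩
    refine ⟨((n : ℤ) : ZMod (p ^ 2)), ?_⟩
    show mpC p ^ n = _
    exact mpC_zpow p n
  · rintro ⟨m, rfl⟩
    refine ⟨(m.val : ℤ), ?_⟩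
    show mpC p ^ ((m.val : ℤ)) = _
    rw [mpC_zpow]
    ext
    · dsimp
      push_cast
      rw [ZMod.natCast_val, ZMod.cast_id]
    · rfl

theorem mp_mem_center_iff [Fact p.Prime] (x : Mp p) :
    x ∈ Subgroup.center (Mp p) ↔
      ∃ m : ZMod (p ^ 2), x = ⟨(p : ZMod (p ^ 2)) * m, 0⟩ := by
  have hp1 : 1 < p := (Fact.out : p.Prime).one_lt
  have hp0 : p ≠ 0 := by omega
  haveI : Fact (1 < p) := ⟨hp1⟩
  rw [Subgroup.mem_center_iff]
  constructor
  · intro h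
    have h1 := congrArg Mp.fst (h ⟨1, 0⟩)
    have h2 := congrArg Mp.fst (h ⟨0, 1⟩)
    simp only [Mp.mul_def] at h1 h2
    rw [mp_e_zero, mp_e_eq] at h1
    -- h1 : 1 + 1 * x.fst = x.fst + (1 + x.snd.val * p) * 1
    have hs : x.snd = 0 := by
      have hval : ((x.snd.val * p : ℕ) : ZMod (p ^ 2)) = 0 := by
        push_cast
        linear_combination -h1
      rw [ZMod.natCast_eq_zero_iff] at hval
      obtain ⟨c, hc⟩ := hval
      have hdvd : p ∣ x.snd.val := ⟨c, by nlinarith [hc]⟩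
      have hlt : x.snd.val < p := ZMod.val_lt x.snd
      have := Nat.eq_zero_of_dvd_of_lt hdvd hlt
      exact (ZMod.val_eq_zero x.snd).mp this
    rw [hs, mp_e_zero, mp_e_eq, ZMod.val_one] at h2
    -- h2 : 0 + (1 + 1 * p) * x.fst = x.fst + 1 * 0
    have hval2 : ((p * x.fst.val : ℕ) : ZMod (p ^ 2)) = 0 := by
      push_cast
      rw [ZMod.natCast_val, ZMod.cast_id]
      linear_combination h2
    rw [ZMod.natCast_eq_zero_iff] at hval2
    obtain ⟨c, hc⟩ := hval2
    have hdvd : p ∣ x.fst.val := ⟨c, by nlinarith [hc]⟩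
    obtain ⟨t, ht⟩ := hdvd
    refine ⟨(t : ZMod (p ^ 2)), ?_⟩
    ext
    · dsimp
      have : x.fst = ((x.fst.val : ℕ) : ZMod (p ^ 2)) := by
        rw [ZMod.natCast_val, ZMod.cast_id]
      rw [this, ht]
      push_cast
      ring
    · exact hs
  · rintro ⟨m, rfl⟩
    intro g
    rw [Mp.mul_def, Mp.mul_def]
    ext
    · dsimp
      rw [mp_e_eq, mp_e_zero]
      linear_combination ((g.snd.val : ZMod (p ^ 2)) * m) * Mp.p_sq_zero p
    · dsimp
      ring

theorem mp_commutatorElement [Fact p.Prime] (x y : Mp p) :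
    ∃ m : ZMod (p ^ 2), ⁅x, y⁆ = ⟨(p : ZMod (p ^ 2)) * m, 0⟩ := by
  refine ⟨(x.snd.val : ZMod (p ^ 2)) * y.fst - (y.snd.val : ZMod (p ^ 2)) * x.fst, ?_⟩
  show x * y * x⁻¹ * y⁻¹ = _
  simp only [Mp.mul_def, Mp.inv_def]
  have hu := mp_e_mul_e_neg p x.snd
  have hv := mp_e_mul_e_neg p y.snd
  have ek := mp_e_eq p x.snd
  have el := mp_e_eq p y.snd
  ext
  · dsimp
    simp only [Mp.e_add]
    linear_combination y.fst * ek - x.fst * el -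
      (Mp.e p y.snd * x.fst + y.fst) * hu -
      y.fst * Mp.e p x.snd * Mp.e p (-x.snd) * hv
  · dsimp
    ring

end Aux

/-- For an odd prime `p`, the commutator (derived) subgroup of the
group `M(p)` equals its center; in particular it is cyclic of order `p`, generated by
`(p, 0)`. -/
theorem mp_commutator_eq_center (p : ℕ) [Fact p.Prime] (hp : Odd p) :
    commutator (Mp p) = Subgroup.center (Mp p) ∧
    commutator (Mp p) = Subgroup.zpowers (mpC p) ∧
    orderOf (mpC p) = p := by
  have hp1 : 1 < p := (Fact.out : p.Prime).one_lt
  haveI : Fact (1 < p) := ⟨hp1⟩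
  have hcz : Subgroup.center (Mp p) = Subgroup.zpowers (mpC p) := by
    ext x
    rw [mp_mem_center_iff, mem_zpowers_mpC_iff]
  have key : ⁅(⟨0, 1⟩ : Mp p), (⟨1, 0⟩ : Mp p)⁆ = mpC p := by
    show (⟨0, 1⟩ : Mp p) * ⟨1, 0⟩ * (⟨0, 1⟩ : Mp p)⁻¹ * (⟨1, 0⟩ : Mp p)⁻¹ = _
    simp only [Mp.mul_def, Mp.inv_def]
    ext
    · dsimp
      rw [neg_zero, mp_e_zero, add_zero, show ((1 : ZMod p) + -1) = 0 by ring,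
        mp_e_zero, mp_e_eq, ZMod.val_one]
      show _ = (mpC p).fst
      dsimp [mpC]
      ring
    · dsimp
      show _ = (mpC p).snd
      dsimp [mpC]
      ring
  have hcomm : commutator (Mp p) = Subgroup.zpowers (mpC p) := by
    apply le_antisymm
    · rw [commutator_def, Subgroup.commutator_le]
      intro g1 _ g2 _
      obtain ⟨m, hm⟩ := mp_commutatorElement p g1 g2
      rw [mem_zpowers_mpC_iff]
      exact ⟨m, hm⟩
    · rw [Subgroup.zpowers_le, ← key, commutator_def]
      exact Subgroup.commutator_mem_commutator (Subgroup.mem_top _) (Subgroup.mem_top _)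
  refine ⟨hcomm.trans hcz.symm, hcomm, ?_⟩
  have hpow : mpC p ^ p = 1 := by
    rw [mpC_pow]
    ext
    · dsimp
      rw [Mp.one_def]
      exact Mp.p_sq_zero p
    · rfl
  have hne : mpC p ≠ 1 := by
    intro h
    have hfst := congrArg Mp.fst h
    rw [Mp.one_def] at hfst
    dsimp [mpC] at hfst
    rw [ZMod.natCast_eq_zero_iff] at hfst
    have := Nat.le_of_dvd (by omega) hfst
    nlinarith
  exact orderOf_eq_prime hpow hne
end

section
/- Let p be an odd prime, ω = exp(2πi/p). Let D be the p×p complex diagonal matrix with diagonal entries ω^0, ω^1, ..., ω^{p-1}, and let P be the p×p complex matrix with (i,j) entry equal to 1 if i ≡ j−1 (mod p) and 0 otherwise. For every matrix g ≠ I in the subgroup of GL_p(ℂ) generated by D and P, the fixed subspace {v ∈ ℂ^p : g·v = v} has dimension at most 1. Consequently, the set of vectors in ℂ^p fixed by some non-identity element of this subgroup is contained in a finite union of one-dimensional linear subspaces (the group acts freely outside a finite number of lines). -/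
open Matrix Module
open Fin.NatCast Fin.CommRing

/-- Let `p` be an odd prime, `ω = exp(2πi/p)`, `D` the diagonal
matrix with entries `ω^0, …, ω^(p-1)` and `P` the cyclic permutation matrix, both
viewed as units of the matrix ring.  Every non-identity element `g` of the subgroup
generated by `D` and `P` has fixed subspace `{v : g·v = v}` of dimension at most `1`;
consequently the set of vectors fixed by some non-identity element of this subgroup is
contained in a finite union of one-dimensional linear subspaces. -/
theorem heis_rep_acts_freely_off_lines (p : ℕ) [Fact p.Prime] (hp : Odd p)
    (ω : ℂ) (hω : ω = Complex.exp (2 * Real.pi * Complex.I / p))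
    (D P : (Matrix (Fin p) (Fin p) ℂ)ˣ)
    (hD : (D : Matrix (Fin p) (Fin p) ℂ) = Matrix.diagonal fun i : Fin p => ω ^ (i : ℕ))
    (hP : (P : Matrix (Fin p) (Fin p) ℂ)
        = Matrix.of fun i j : Fin p => if i = j - 1 then (1 : ℂ) else 0) :
    (∀ g ∈ Subgroup.closure {D, P}, g ≠ 1 →
      Module.finrank ℂ
        (LinearMap.ker ((g : Matrix (Fin p) (Fin p) ℂ).mulVecLin
          - (LinearMap.id : (Fin p → ℂ) →ₗ[ℂ] (Fin p → ℂ)))) ≤ 1) ∧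
    ∃ s : Finset (Submodule ℂ (Fin p → ℂ)),
      (∀ W ∈ s, Module.finrank ℂ W = 1) ∧
      {v : Fin p → ℂ | ∃ g ∈ Subgroup.closure {D, P}, g ≠ 1 ∧
          (g : Matrix (Fin p) (Fin p) ℂ).mulVec v = v}
        ⊆ ⋃ W ∈ s, (W : Set (Fin p → ℂ)) := by
  classical
  have hp' : p.Prime := Fact.out
  haveI : NeZero p := ⟨hp'.pos.ne'⟩
  set D₀ : Matrix (Fin p) (Fin p) ℂ := (D : Matrix (Fin p) (Fin p) ℂ) with hD₀def
  set P₀ : Matrix (Fin p) (Fin p) ℂ := (P : Matrix (Fin p) (Fin p) ℂ) with hP₀def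
  -- ω is a primitive p-th root of unity
  have hprim : IsPrimitiveRoot ω p := by
    rw [hω]; exact Complex.isPrimitiveRoot_exp p hp'.ne_zero
  have hω1 : ω ^ p = 1 := hprim.pow_eq_one
  have hωne : ω ≠ 0 := by
    intro h
    have := hω1
    rw [h, zero_pow hp'.ne_zero] at this
    exact zero_ne_one this
  have hmod : ∀ m : ℕ, ω ^ m = ω ^ (m % p) := by
    intro m
    conv_lhs => rw [← Nat.div_add_mod m p]
    rw [pow_add, pow_mul, hω1, one_pow, one_mul]
  have hcong : ∀ {m n : ℕ}, m ≡ n [MOD p] → ω ^ m = ω ^ n := by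
    intro m n h
    rw [hmod m, hmod n, h]
  -- extensionality via mulVec
  have matext : ∀ {A B : Matrix (Fin p) (Fin p) ℂ}, (∀ v, A *ᵥ v = B *ᵥ v) → A = B := by
    intro A B h
    have : Matrix.toLin' A = Matrix.toLin' B := by
      apply LinearMap.ext
      intro v
      rw [Matrix.toLin'_apply, Matrix.toLin'_apply, h]
    exact Matrix.toLin'.injective this
  -- action of powers of D₀
  have hDv : ∀ (a : ℕ) (v : Fin p → ℂ) (i : Fin p),
      (D₀ ^ a *ᵥ v) i = ω ^ (a * (i : ℕ)) * v i := by
    intro a v i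
    rw [hD, Matrix.diagonal_pow, Matrix.mulVec_diagonal, Pi.pow_apply, ← pow_mul,
      Nat.mul_comm]
  -- action of P₀
  have hPv : ∀ (v : Fin p → ℂ) (i : Fin p), (P₀ *ᵥ v) i = v (i + 1) := by
    intro v i
    rw [hP]
    show (∑ j, (if i = j - 1 then (1:ℂ) else 0) * v j) = v (i + 1)
    rw [Finset.sum_eq_single (i + 1)]
    · rw [if_pos (by rw [add_sub_cancel_right]), one_mul]
    · intro j _ hj
      rw [if_neg, zero_mul]
      intro hij
      exact hj (by rw [hij, sub_add_cancel])
    · intro h; exact absurd (Finset.mem_univ _) h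
  have hPbv : ∀ (b : ℕ) (v : Fin p → ℂ) (i : Fin p),
      (P₀ ^ b *ᵥ v) i = v (i + (b : Fin p)) := by
    intro b
    induction b with
    | zero => intro v i; simp
    | succ b ih =>
      intro v i
      have h1 : P₀ ^ (b + 1) *ᵥ v = P₀ *ᵥ (P₀ ^ b *ᵥ v) := by
        rw [Matrix.mulVec_mulVec, ← pow_succ']
      rw [h1, hPv, ih]
      congr 1
      push_cast
      ring
  -- master action formula
  have hMv : ∀ (a b c : ℕ) (v : Fin p → ℂ) (i : Fin p),
      ((ω ^ c • (D₀ ^ a * P₀ ^ b)) *ᵥ v) i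
        = ω ^ (c + a * (i : ℕ)) * v (i + (b : Fin p)) := by
    intro a b c v i
    rw [Matrix.smul_mulVec, Pi.smul_apply, ← Matrix.mulVec_mulVec]
    rw [hDv, hPbv, smul_eq_mul, pow_add]
    ring
  -- value congruence for Fin sums
  have hvadd : ∀ (i : Fin p) (b : ℕ), ((i + (b : Fin p) : Fin p) : ℕ) ≡ (i : ℕ) + b [MOD p] := by
    intro i b
    show ((i + (b : Fin p) : Fin p) : ℕ) % p = ((i : ℕ) + b) % p
    rw [Fin.val_add, Fin.val_natCast, Nat.mod_mod_of_dvd _ dvd_rfl, Nat.add_mod_mod]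
  -- commutation relation
  have hPD : ∀ a b : ℕ, P₀ ^ b * D₀ ^ a = ω ^ (b * a) • (D₀ ^ a * P₀ ^ b) := by
    intro a b
    apply matext
    intro v
    funext i
    rw [← Matrix.mulVec_mulVec, hPbv, hDv, Matrix.smul_mulVec, Pi.smul_apply,
      ← Matrix.mulVec_mulVec, hDv, hPbv, smul_eq_mul, ← mul_assoc, ← pow_add]
    congr 1
    apply hcong
    calc a * ((i + (b : Fin p) : Fin p) : ℕ) ≡ a * ((i : ℕ) + b) [MOD p] :=
          Nat.ModEq.mul_left a (hvadd i b)
      _ = b * a + a * (i : ℕ) := by ring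
  -- product formula
  have hmulM : ∀ a b c a' b' c' : ℕ,
      (ω ^ c • (D₀ ^ a * P₀ ^ b)) * (ω ^ c' • (D₀ ^ a' * P₀ ^ b'))
        = ω ^ (c + c' + b * a') • (D₀ ^ (a + a') * P₀ ^ (b + b')) := by
    intro a b c a' b' c'
    rw [smul_mul_smul_comm]
    rw [show (D₀ ^ a * P₀ ^ b) * (D₀ ^ a' * P₀ ^ b')
        = D₀ ^ a * (P₀ ^ b * D₀ ^ a') * P₀ ^ b' by noncomm_ring]
    rw [hPD a' b, Matrix.mul_smul, Matrix.smul_mul, smul_smul]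
    rw [show D₀ ^ a * (D₀ ^ a' * P₀ ^ b) * P₀ ^ b' = D₀ ^ (a + a') * P₀ ^ (b + b') by
      rw [pow_add, pow_add]; noncomm_ring]
    rw [← pow_add]
    ring_nf
  -- powers of order p are trivial
  have hD1 : D₀ ^ p = 1 := by
    rw [hD, Matrix.diagonal_pow]
    have he : ((fun i : Fin p => ω ^ (i : ℕ)) ^ p) = fun _ : Fin p => (1 : ℂ) := by
      funext i
      rw [Pi.pow_apply, ← pow_mul, mul_comm, pow_mul, hω1, one_pow]
    rw [he, Matrix.diagonal_one]
  have hP1 : P₀ ^ p = 1 := by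
    apply matext
    intro v
    funext i
    rw [hPbv, Matrix.one_mulVec, Fin.natCast_self, add_zero]
  have hDmod : ∀ a : ℕ, D₀ ^ a = D₀ ^ (a % p) := by
    intro a
    conv_lhs => rw [← Nat.div_add_mod a p]
    rw [pow_add, pow_mul, hD1, one_pow, one_mul]
  have hPmod : ∀ b : ℕ, P₀ ^ b = P₀ ^ (b % p) := by
    intro b
    conv_lhs => rw [← Nat.div_add_mod b p]
    rw [pow_add, pow_mul, hP1, one_pow, one_mul]
  have hdvd : ∀ a : ℕ, p ∣ a + (p - a % p) := by
    intro a
    have h1 : a % p < p := Nat.mod_lt _ hp'.pos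
    have h2 := Nat.div_add_mod a p
    refine ⟨a / p + 1, ?_⟩
    rw [Nat.mul_add, Nat.mul_one]
    generalize hq : p * (a / p) = t at h2 ⊢
    omega
  have hDz : ∀ n : ℕ, p ∣ n → D₀ ^ n = 1 := by
    rintro n ⟨q, rfl⟩; rw [pow_mul, hD1, one_pow]
  have hPz : ∀ n : ℕ, p ∣ n → P₀ ^ n = 1 := by
    rintro n ⟨q, rfl⟩; rw [pow_mul, hP1, one_pow]
  have hωz : ∀ n : ℕ, p ∣ n → ω ^ n = 1 := by
    rintro n ⟨q, rfl⟩; rw [pow_mul, hω1, one_pow]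
  -- every element of the closure has the normal form
  have hrep : ∀ g ∈ Subgroup.closure ({D, P} : Set (Matrix (Fin p) (Fin p) ℂ)ˣ),
      ∃ a b c : ℕ, (g : Matrix (Fin p) (Fin p) ℂ) = ω ^ c • (D₀ ^ a * P₀ ^ b) := by
    intro g hg
    induction hg using Subgroup.closure_induction with
    | mem x hx =>
      rcases hx with rfl | rfl
      · exact ⟨1, 0, 0, by simp [hD₀def]⟩
      · exact ⟨0, 1, 0, by simp [hP₀def]⟩
    | one => exact ⟨0, 0, 0, by simp⟩
    | mul x y hx hy ihx ihy =>
      obtain ⟨a, b, c, hxe⟩ := ihx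
      obtain ⟨a', b', c', hye⟩ := ihy
      exact ⟨a + a', b + b', c + c' + b * a', by
        rw [Units.val_mul, hxe, hye, hmulM]⟩
    | inv x hx ih =>
      obtain ⟨a, b, c, hxe⟩ := ih
      set a' := p - a % p with ha'
      set b' := p - b % p with hb'
      set c' := p - (c + b * a') % p with hc'
      refine ⟨a', b', c', ?_⟩
      have hone : (x : Matrix (Fin p) (Fin p) ℂ) * (ω ^ c' • (D₀ ^ a' * P₀ ^ b')) = 1 := by
        rw [hxe, hmulM]
        rw [hDz (a + a') (hdvd a), hPz (b + b') (hdvd b),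
          hωz (c + c' + b * a') (by
            have := hdvd (c + b * a')
            rw [show c + c' + b * a' = (c + b * a') + (p - (c + b * a') % p) by
              rw [hc']; ring, ]
            exact this)]
        simp
      calc ((x⁻¹ : (Matrix (Fin p) (Fin p) ℂ)ˣ) : Matrix (Fin p) (Fin p) ℂ)
          = ((x⁻¹ : (Matrix (Fin p) (Fin p) ℂ)ˣ) : Matrix (Fin p) (Fin p) ℂ)
            * ((x : Matrix (Fin p) (Fin p) ℂ) * (ω ^ c' • (D₀ ^ a' * P₀ ^ b'))) := by
            rw [hone, mul_one]
        _ = ω ^ c' • (D₀ ^ a' * P₀ ^ b') := by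
            rw [← mul_assoc, Units.inv_mul, one_mul]
  -- kernel membership characterization
  have hker : ∀ (a b c : ℕ) (v : Fin p → ℂ),
      v ∈ LinearMap.ker ((ω ^ c • (D₀ ^ a * P₀ ^ b)).mulVecLin
        - (LinearMap.id : (Fin p → ℂ) →ₗ[ℂ] (Fin p → ℂ))) ↔
      ∀ i : Fin p, ω ^ (c + a * (i : ℕ)) * v (i + (b : Fin p)) = v i := by
    intro a b c v
    rw [LinearMap.mem_ker]
    constructor
    · intro h i
      have h1 := congrFun h i
      simp only [LinearMap.sub_apply, LinearMap.id_apply, Matrix.mulVecLin_apply,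
        Pi.sub_apply, Pi.zero_apply, sub_eq_zero] at h1
      rw [hMv] at h1
      exact h1
    · intro h
      funext i
      simp only [LinearMap.sub_apply, LinearMap.id_apply, Matrix.mulVecLin_apply,
        Pi.sub_apply, Pi.zero_apply, sub_eq_zero]
      rw [hMv]
      exact h i
  -- finrank bound from a pinning coordinate
  have hfr : ∀ (K : Submodule ℂ (Fin p → ℂ)) (i₀ : Fin p),
      (∀ v ∈ K, v i₀ = 0 → v = 0) → finrank ℂ K ≤ 1 := by
    intro K i₀ h
    have hinj : Function.Injective
        ((LinearMap.proj i₀ : (Fin p → ℂ) →ₗ[ℂ] ℂ) ∘ₗ K.subtype) := by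
      rw [← LinearMap.ker_eq_bot, LinearMap.ker_eq_bot']
      intro m hm
      have hm0 : (m : Fin p → ℂ) i₀ = 0 := hm
      exact Subtype.ext (h m.1 m.2 hm0)
    have hle := LinearMap.finrank_le_finrank_of_injective hinj
    simpa using hle
  -- the key bound
  have key : ∀ a b c : ℕ, (ω ^ c • (D₀ ^ a * P₀ ^ b)) ≠ 1 →
      finrank ℂ (LinearMap.ker ((ω ^ c • (D₀ ^ a * P₀ ^ b)).mulVecLin
        - (LinearMap.id : (Fin p → ℂ) →ₗ[ℂ] (Fin p → ℂ)))) ≤ 1 := by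
    intro a b c hM1
    by_cases hbp : p ∣ b
    · have hb0 : (b : Fin p) = 0 := Fin.natCast_eq_zero.mpr hbp
      by_cases hap : p ∣ a
      · -- scalar matrix
        have hsc : ∀ i : Fin p, ω ^ (c + a * (i : ℕ)) = ω ^ c := by
          intro i
          apply hcong
          have h2 : a * (i : ℕ) ≡ 0 [MOD p] :=
            (Nat.modEq_zero_iff_dvd).mpr (hap.mul_right _)
          simpa using Nat.ModEq.add_left c h2
        by_cases hc1 : ω ^ c = 1
        · exfalso
          apply hM1
          apply matext
          intro v
          funext i
          rw [hMv, hsc, hc1, one_mul, hb0, add_zero, Matrix.one_mulVec]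
        · apply hfr _ (0 : Fin p)
          intro v hv _
          rw [hker] at hv
          funext i
          show v i = 0
          by_contra hne
          have h1 := hv i
          rw [hsc, hb0, add_zero] at h1
          exact hc1 (mul_right_cancel₀ hne (by rw [h1, one_mul]))
      · -- nontrivial diagonal
        have huniq : ∀ i j : Fin p,
            ω ^ (c + a * (i : ℕ)) = 1 → ω ^ (c + a * (j : ℕ)) = 1 → i = j := by
          intro i j hi hj
          have hmm : (c + a * (i : ℕ)) % p = (c + a * (j : ℕ)) % p := by
            have h1 := hi.trans hj.symm
            rw [hmod (c + a * (i : ℕ)), hmod (c + a * (j : ℕ))] at h1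
            exact hprim.pow_inj (Nat.mod_lt _ hp'.pos) (Nat.mod_lt _ hp'.pos) h1
          have h2 : a * (i : ℕ) ≡ a * (j : ℕ) [MOD p] := Nat.ModEq.add_left_cancel' c hmm
          have hco : Nat.Coprime p a := hp'.coprime_iff_not_dvd.mpr hap
          have h3 : (i : ℕ) ≡ (j : ℕ) [MOD p] := Nat.ModEq.cancel_left_of_coprime hco h2
          refine Fin.ext ?_
          rw [← Nat.mod_eq_of_lt i.isLt, ← Nat.mod_eq_of_lt j.isLt]
          exact h3
        by_cases hex : ∃ i₀ : Fin p, ω ^ (c + a * ((i₀ : Fin p) : ℕ)) = 1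
        · obtain ⟨i₀, hi₀⟩ := hex
          apply hfr _ i₀
          intro v hv h0
          rw [hker] at hv
          funext i
          show v i = 0
          by_cases hii : i = i₀
          · rw [hii]; exact h0
          · by_contra hne
            have h1 := hv i
            rw [hb0, add_zero] at h1
            exact hii (huniq i i₀ (mul_right_cancel₀ hne (by rw [h1, one_mul])) hi₀)
        · apply hfr _ (0 : Fin p)
          intro v hv _
          rw [hker] at hv
          funext i
          show v i = 0
          by_contra hne
          have h1 := hv i
          rw [hb0, add_zero] at h1
          exact hex ⟨i, mul_right_cancel₀ hne (by rw [h1, one_mul])⟩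
    · -- the shift part is nontrivial: orbit argument
      have hbz : ((b : ℕ) : ZMod p) ≠ 0 := by
        rw [Ne, ZMod.natCast_eq_zero_iff]
        exact hbp
      have hsurj : ∀ j : Fin p, ∃ k : ℕ, ((k * b : ℕ) : Fin p) = j := by
        intro j
        set u : ZMod p := (((j : ℕ) : ZMod p) * ((b : ℕ) : ZMod p)⁻¹) with hu
        refine ⟨u.val, ?_⟩
        have hcast : ((u.val * b : ℕ) : ZMod p) = ((j : ℕ) : ZMod p) := by
          rw [Nat.cast_mul, ZMod.natCast_rightInverse u, hu, mul_assoc,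
            inv_mul_cancel₀ hbz, mul_one]
        have hmeq : (u.val * b) % p = (j : ℕ) % p :=
          (ZMod.natCast_eq_natCast_iff' _ _ _).mp hcast
        refine Fin.ext ?_
        rw [Fin.val_natCast, hmeq, Nat.mod_eq_of_lt j.isLt]
      apply hfr _ (0 : Fin p)
      intro v hv h0
      rw [hker] at hv
      have hz : ∀ k : ℕ, v ((k * b : ℕ) : Fin p) = 0 := by
        intro k
        induction k with
        | zero => simpa using h0
        | succ k ih =>
          have h1 := hv (((k * b : ℕ) : Fin p))
          rw [ih] at h1
          have h2 : v ((((k * b : ℕ)) : Fin p) + (b : Fin p)) = 0 := by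
            rcases mul_eq_zero.mp h1 with h | h
            · exact absurd h (pow_ne_zero _ hωne)
            · exact h
          rw [show (((k + 1) * b : ℕ) : Fin p) = (((k * b : ℕ)) : Fin p) + (b : Fin p) by
            push_cast; ring]
          exact h2
      funext j
      obtain ⟨k, hk⟩ := hsurj j
      show v j = 0
      rw [← hk]
      exact hz k
  -- part 1
  have part1 : ∀ g ∈ Subgroup.closure ({D, P} : Set (Matrix (Fin p) (Fin p) ℂ)ˣ), g ≠ 1 →
      finrank ℂ (LinearMap.ker ((g : Matrix (Fin p) (Fin p) ℂ).mulVecLin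
        - (LinearMap.id : (Fin p → ℂ) →ₗ[ℂ] (Fin p → ℂ)))) ≤ 1 := by
    intro g hg hg1
    obtain ⟨a, b, c, he⟩ := hrep g hg
    rw [he]
    apply key
    intro h1
    exact hg1 (Units.ext (by rw [he, h1, Units.val_one]))
  -- choosing lines
  have hline : ∀ K : Submodule ℂ (Fin p → ℂ), ∃ W : Submodule ℂ (Fin p → ℂ),
      finrank ℂ W = 1 ∧ (finrank ℂ K ≤ 1 → K ≤ W) := by
    intro K
    by_cases h1 : finrank ℂ K = 1
    · exact ⟨K, h1, fun _ => le_rfl⟩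
    · refine ⟨Submodule.span ℂ {Pi.single (0 : Fin p) (1 : ℂ)}, ?_, ?_⟩
      · apply finrank_span_singleton
        intro h
        have h2 := congrFun h 0
        rw [Pi.single_eq_same] at h2
        exact one_ne_zero h2
      · intro hle
        have h0 : finrank ℂ K = 0 := by omega
        have hbot : K = ⊥ := Submodule.finrank_eq_zero.mp h0
        rw [hbot]
        exact bot_le
  choose Wf hW1 hW2 using hline
  refine ⟨part1, Finset.image (fun t : Fin p × Fin p × Fin p =>
      Wf (LinearMap.ker ((ω ^ ((t.2.2 : Fin p) : ℕ) •
          (D₀ ^ ((t.1 : Fin p) : ℕ) * P₀ ^ ((t.2.1 : Fin p) : ℕ))).mulVecLin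
        - (LinearMap.id : (Fin p → ℂ) →ₗ[ℂ] (Fin p → ℂ))))) Finset.univ, ?_, ?_⟩
  · intro W hW
    obtain ⟨t, -, rfl⟩ := Finset.mem_image.mp hW
    exact hW1 _
  · rintro v ⟨g, hg, hg1, hgv⟩
    obtain ⟨a, b, c, he⟩ := hrep g hg
    have hem : (g : Matrix (Fin p) (Fin p) ℂ)
        = ω ^ (c % p) • (D₀ ^ (a % p) * P₀ ^ (b % p)) := by
      rw [he, hDmod a, hPmod b]
      congr 1
      exact hmod c
    have hne : ω ^ (c % p) • (D₀ ^ (a % p) * P₀ ^ (b % p)) ≠ 1 := by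
      intro h1
      exact hg1 (Units.ext (by rw [hem, h1, Units.val_one]))
    have hvK : v ∈ LinearMap.ker ((ω ^ (c % p) •
        (D₀ ^ (a % p) * P₀ ^ (b % p))).mulVecLin
        - (LinearMap.id : (Fin p → ℂ) →ₗ[ℂ] (Fin p → ℂ))) := by
      rw [hker]
      intro i
      rw [hem] at hgv
      have h2 := congrFun hgv i
      rw [hMv (a % p) (b % p) (c % p) v i] at h2
      exact h2
    refine Set.mem_iUnion₂.mpr ⟨Wf _, ?_, hW2 _ (key _ _ _ hne) hvK⟩
    refine Finset.mem_image.mpr ⟨(⟨a % p, Nat.mod_lt _ hp'.pos⟩,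
      ⟨b % p, Nat.mod_lt _ hp'.pos⟩, ⟨c % p, Nat.mod_lt _ hp'.pos⟩), Finset.mem_univ _, rfl⟩
end

section
/- Let p be an odd prime, ζ = exp(2πi/p²). Let A be the p×p complex diagonal matrix with diagonal entries ζ^{1+kp} for k = 0,...,p−1, and let P be the p×p complex matrix with (i,j) entry equal to 1 if i ≡ j−1 (mod p) and 0 otherwise. For every matrix g ≠ I in the subgroup of GL_p(ℂ) generated by A and P, the fixed subspace {v ∈ ℂ^p : g·v = v} has dimension at most 1. Consequently, the set of vectors in ℂ^p fixed by some non-identity element of this subgroup is contained in a finite union of one-dimensional linear subspaces (the group acts freely outside a finite number of lines). -/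
namespace MP15

open Matrix
open Fin.NatCast Fin.CommRing

variable (ζ : ℂ) (p : ℕ) [NeZero p]

/-- The cyclic shift matrix. -/
def Pm : Matrix (Fin p) (Fin p) ℂ := Matrix.of fun i j => if i = j - 1 then (1 : ℂ) else 0

/-- The diagonal vector. -/
noncomputable def dvec : Fin p → ℂ := fun k => ζ ^ (1 + (k : ℕ) * p)

/-- Representative matrix. -/
noncomputable def repM (c a b : ℕ) : Matrix (Fin p) (Fin p) ℂ :=
  ζ ^ (p * c) • (Matrix.diagonal (fun k => dvec ζ p k ^ a) * (Pm p) ^ b)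

lemma Pm_pow (b : ℕ) :
    (Pm p) ^ b = Matrix.of fun i j => if i = (j - (b : Fin p)) then (1 : ℂ) else 0 := by
  induction b with
  | zero => ext i j; simp [Matrix.one_apply, eq_comm]
  | succ b ih =>
    rw [pow_succ, ih]
    ext i j
    rw [Matrix.mul_apply, Finset.sum_eq_single (j - 1)]
    · have : j - 1 - (b : Fin p) = j - ((b : ℕ) + 1 : Fin p) := by
        push_cast; ring
      simp [Pm, this]
    · intro k _ hk
      simp [Pm, hk]
    · simp

lemma Pm_pow_mulVec (b : ℕ) (v : Fin p → ℂ) (i : Fin p) :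
    ((Pm p) ^ b).mulVec v i = v (i + (b : Fin p)) := by
  rw [Pm_pow, Matrix.mulVec, dotProduct, Finset.sum_eq_single (i + (b : Fin p))]
  · simp
  · intro k _ hk
    have : ¬ i = k - (b : Fin p) := by
      intro h; apply hk; rw [h]; ring
    simp [this]
  · simp

lemma Pm_pow_p : (Pm p) ^ p = 1 := by
  rw [Pm_pow]
  ext i j
  simp [Matrix.one_apply, Fin.natCast_self, eq_comm]

lemma Pm_pow_mod (b : ℕ) : (Pm p) ^ b = (Pm p) ^ (b % p) := by
  conv_lhs => rw [← Nat.mod_add_div b p]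
  rw [pow_add, pow_mul, Pm_pow_p, one_pow, mul_one]

lemma Pm_mul_diagonal (f : Fin p → ℂ) :
    Pm p * Matrix.diagonal f = Matrix.diagonal (fun i => f (i + 1)) * Pm p := by
  ext i j
  rw [Matrix.mul_apply, Matrix.mul_apply, Finset.sum_eq_single j, Finset.sum_eq_single i]
  · rw [Matrix.diagonal_apply_eq, Matrix.diagonal_apply_eq]
    by_cases h : i = j - 1
    · have hj : j = i + 1 := by rw [h]; ring
      subst hj
      rw [mul_comm]
    · have h0 : Pm p i j = 0 := by simp [Pm, h]
      rw [h0, zero_mul, mul_zero]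
  · intro k _ hk; simp [Matrix.diagonal, Ne.symm hk]
  · simp
  · intro k _ hk; simp [Matrix.diagonal, hk]
  · simp


variable {ζ p}

lemma dvec_succ (hp1 : 1 < p) (hz : ζ ^ p ^ 2 = 1) (k : Fin p) :
    dvec ζ p (k + 1) = ζ ^ p * dvec ζ p k := by
  have hv1 : ((1 : Fin p) : ℕ) = 1 := by
    rw [Fin.val_one', Nat.mod_eq_of_lt hp1]
  unfold dvec
  by_cases hk : (k : ℕ) + 1 < p
  · have hval : ((k + 1 : Fin p) : ℕ) = (k : ℕ) + 1 := by
      rw [Fin.val_add, hv1, Nat.mod_eq_of_lt hk]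
    rw [hval, ← pow_add]
    congr 1
    ring
  · have hk' : (k : ℕ) + 1 = p := by
      have := k.isLt; omega
    have hval : ((k + 1 : Fin p) : ℕ) = 0 := by
      rw [Fin.val_add, hv1, hk', Nat.mod_self]
    rw [hval]
    have he : p + (1 + (k : ℕ) * p) = (1 + 0 * p) + p ^ 2 := by
      generalize (k : ℕ) = m at hk' ⊢
      subst hk'
      ring
    symm
    rw [← pow_add, he, pow_add, hz, mul_one]

lemma dvec_pow_sq (hz : ζ ^ p ^ 2 = 1) (k : Fin p) : dvec ζ p k ^ p ^ 2 = 1 := by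
  unfold dvec
  rw [← pow_mul, mul_comm, pow_mul, hz, one_pow]

lemma dvec_ne_zero (hz0 : ζ ≠ 0) (k : Fin p) : dvec ζ p k ≠ 0 :=
  pow_ne_zero _ hz0

lemma diag_pow_mod (hz : ζ ^ p ^ 2 = 1) (a : ℕ) (k : Fin p) :
    dvec ζ p k ^ a = dvec ζ p k ^ (a % p ^ 2) := by
  conv_lhs => rw [← Nat.mod_add_div a (p ^ 2)]
  rw [pow_add, pow_mul, dvec_pow_sq hz, one_pow, mul_one]

lemma Pm_mul_diag_pow (hp1 : 1 < p) (hz : ζ ^ p ^ 2 = 1) (a : ℕ) :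
    Pm p * Matrix.diagonal (fun k => dvec ζ p k ^ a)
      = ζ ^ (p * a) • (Matrix.diagonal (fun k => dvec ζ p k ^ a) * Pm p) := by
  rw [Pm_mul_diagonal, ← smul_mul_assoc]
  congr 1
  have : (fun i : Fin p => dvec ζ p (i + 1) ^ a)
      = ζ ^ (p * a) • fun k : Fin p => dvec ζ p k ^ a := by
    funext k
    simp only [Pi.smul_apply, smul_eq_mul]
    rw [dvec_succ hp1 hz, mul_pow, ← pow_mul]
  rw [this, Matrix.diagonal_smul]

lemma Pm_pow_mul_diag_pow (hp1 : 1 < p) (hz : ζ ^ p ^ 2 = 1) (a b : ℕ) :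
    (Pm p) ^ b * Matrix.diagonal (fun k => dvec ζ p k ^ a)
      = ζ ^ (p * a * b) • (Matrix.diagonal (fun k => dvec ζ p k ^ a) * (Pm p) ^ b) := by
  induction b with
  | zero => simp
  | succ b ih =>
    rw [pow_succ', mul_assoc, ih, mul_smul_comm, ← mul_assoc,
      Pm_mul_diag_pow hp1 hz, smul_mul_assoc, smul_smul, ← pow_add]
    rw [show p * a * b + p * a = p * a * (b + 1) by ring]
    congr 1
    exact mul_assoc _ _ _

lemma repM_mul (hp1 : 1 < p) (hz : ζ ^ p ^ 2 = 1) (c a b c' a' b' : ℕ) :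
    repM ζ p c a b * repM ζ p c' a' b'
      = repM ζ p (c + c' + a' * b) (a + a') (b + b') := by
  unfold repM
  rw [smul_mul_assoc, mul_smul_comm, smul_smul, ← pow_add]
  have hX : (Matrix.diagonal (fun k => dvec ζ p k ^ a) * (Pm p) ^ b)
      * (Matrix.diagonal (fun k => dvec ζ p k ^ a') * (Pm p) ^ b')
      = ζ ^ (p * a' * b) •
        (Matrix.diagonal (fun k => dvec ζ p k ^ (a + a')) * (Pm p) ^ (b + b')) := by
    rw [mul_assoc, ← mul_assoc ((Pm p) ^ b), Pm_pow_mul_diag_pow hp1 hz,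
      smul_mul_assoc, mul_smul_comm]
    congr 1
    rw [← mul_assoc, ← mul_assoc, Matrix.diagonal_mul_diagonal]
    have : (fun i : Fin p => dvec ζ p i ^ a * dvec ζ p i ^ a')
        = fun k : Fin p => dvec ζ p k ^ (a + a') := by
      funext k; rw [← pow_add]
    rw [this, mul_assoc, ← pow_add]
  rw [hX, smul_smul, ← pow_add]
  congr 1
  ring

lemma repM_one_of (hz : ζ ^ p ^ 2 = 1) (e a b : ℕ) :
    repM ζ p (e * p) (a * p ^ 2) (b * p) = 1 := by
  unfold repM
  have h1 : ζ ^ (p * (e * p)) = 1 := by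
    rw [show p * (e * p) = p ^ 2 * e by ring, pow_mul, hz, one_pow]
  have h2 : (fun k : Fin p => dvec ζ p k ^ (a * p ^ 2)) = fun _ => (1 : ℂ) := by
    funext k
    rw [mul_comm, pow_mul, dvec_pow_sq hz, one_pow]
  have h3 : (Pm p) ^ (b * p) = 1 := by
    rw [mul_comm, pow_mul, Pm_pow_p, one_pow]
  rw [h1, h2, h3, Matrix.diagonal_one, one_mul, one_smul]

lemma repM_mod (hz : ζ ^ p ^ 2 = 1) (c a b : ℕ) :
    repM ζ p c a b = repM ζ p (c % p) (a % p ^ 2) (b % p) := by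
  unfold repM
  have h1 : ζ ^ (p * c) = ζ ^ (p * (c % p)) := by
    have hsplit : p * c = p * (c % p) + p ^ 2 * (c / p) := by
      conv_lhs => rw [← Nat.mod_add_div c p]
      ring
    have hone : ζ ^ (p ^ 2 * (c / p)) = 1 := by
      rw [pow_mul, hz, one_pow]
    rw [hsplit, pow_add, hone, mul_one]
  have h2 : (fun k : Fin p => dvec ζ p k ^ a)
      = fun k : Fin p => dvec ζ p k ^ (a % p ^ 2) := by
    funext k; exact diag_pow_mod hz a k
  rw [h1, h2, ← Pm_pow_mod]

lemma repM_mulVec (c a b : ℕ) (v : Fin p → ℂ) (i : Fin p) :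
    (repM ζ p c a b).mulVec v i
      = ζ ^ (p * c) * (dvec ζ p i ^ a * v (i + (b : Fin p))) := by
  unfold repM
  rw [Matrix.smul_mulVec, ← Matrix.mulVec_mulVec]
  simp only [Pi.smul_apply, smul_eq_mul]
  rw [Matrix.mulVec_diagonal, Pm_pow_mulVec]

lemma finrank_le_one_of_coord (W : Submodule ℂ (Fin p → ℂ)) (k₀ : Fin p)
    (h : ∀ v ∈ W, v k₀ = 0 → v = 0) : Module.finrank ℂ W ≤ 1 := by
  have hinj : Function.Injective
      ((LinearMap.proj k₀ : (Fin p → ℂ) →ₗ[ℂ] ℂ).comp W.subtype) := by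
    rw [← LinearMap.ker_eq_bot, LinearMap.ker_eq_bot']
    intro m hm
    have hm' : (m : Fin p → ℂ) k₀ = 0 := hm
    exact Subtype.ext (h m.1 m.2 hm')
  simpa using LinearMap.finrank_le_finrank_of_injective hinj

end MP15


/-- Let `p` be an odd prime, `ζ = exp(2πi/p²)`, `A` the diagonal
matrix with entries `ζ^(1+kp)` for `k = 0, …, p-1` and `P` the cyclic permutation
matrix, both viewed as units of the matrix ring.  Every non-identity element `g` of the
subgroup generated by `A` and `P` has fixed subspace `{v : g·v = v}` of dimension at
most `1`; consequently the set of vectors fixed by some non-identity element of this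
subgroup is contained in a finite union of one-dimensional linear subspaces. -/
theorem mp_rep_acts_freely_off_lines (p : ℕ) [Fact p.Prime] (hp : Odd p)
    (ζ : ℂ) (hζ : ζ = Complex.exp (2 * Real.pi * Complex.I / (p ^ 2 : ℕ)))
    (A P : (Matrix (Fin p) (Fin p) ℂ)ˣ)
    (hA : (A : Matrix (Fin p) (Fin p) ℂ)
        = Matrix.diagonal fun k : Fin p => ζ ^ (1 + (k : ℕ) * p))
    (hP : (P : Matrix (Fin p) (Fin p) ℂ)
        = Matrix.of fun i j : Fin p => if i = j - 1 then (1 : ℂ) else 0) :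
    (∀ g ∈ Subgroup.closure {A, P}, g ≠ 1 →
      Module.finrank ℂ
        (LinearMap.ker ((g : Matrix (Fin p) (Fin p) ℂ).mulVecLin
          - (LinearMap.id : (Fin p → ℂ) →ₗ[ℂ] (Fin p → ℂ)))) ≤ 1) ∧
    ∃ s : Finset (Submodule ℂ (Fin p → ℂ)),
      (∀ W ∈ s, Module.finrank ℂ W = 1) ∧
      {v : Fin p → ℂ | ∃ g ∈ Subgroup.closure {A, P}, g ≠ 1 ∧
          (g : Matrix (Fin p) (Fin p) ℂ).mulVec v = v}
        ⊆ ⋃ W ∈ s, (W : Set (Fin p → ℂ)) := by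
  classical
  have hpp : p.Prime := Fact.out
  have hp1 : 1 < p := hpp.one_lt
  haveI : NeZero p := ⟨hpp.ne_zero⟩
  have hpsq : (p ^ 2 : ℕ) ≠ 0 := by positivity
  have hprim : IsPrimitiveRoot ζ (p ^ 2) := hζ ▸ Complex.isPrimitiveRoot_exp (p ^ 2) hpsq
  have hz : ζ ^ p ^ 2 = 1 := hprim.pow_eq_one
  have hz0 : ζ ≠ 0 := by rw [hζ]; exact Complex.exp_ne_zero _
  have hdvd : ∀ n : ℕ, ζ ^ n = 1 ↔ p ^ 2 ∣ n := fun n => hprim.pow_eq_one_iff_dvd n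
  have hA' : (A : Matrix (Fin p) (Fin p) ℂ) = MP15.repM ζ p 0 1 0 := by
    rw [hA]; unfold MP15.repM MP15.dvec; simp
  have hP' : (P : Matrix (Fin p) (Fin p) ℂ) = MP15.repM ζ p 0 0 1 := by
    rw [hP]; unfold MP15.repM MP15.dvec MP15.Pm; simp
  -- every element of the closure is of the canonical form
  have hrep : ∀ g ∈ Subgroup.closure ({A, P} : Set _), ∃ c a b : ℕ,
      (g : Matrix (Fin p) (Fin p) ℂ) = MP15.repM ζ p c a b := by
    intro g hg
    induction hg using Subgroup.closure_induction with
    | mem x hx =>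
      rcases hx with rfl | hx
      · exact ⟨0, 1, 0, hA'⟩
      · rw [Set.mem_singleton_iff] at hx; subst hx
        exact ⟨0, 0, 1, hP'⟩
    | one =>
      refine ⟨0, 0, 0, ?_⟩
      rw [Units.val_one]
      simpa using (MP15.repM_one_of hz 0 0 0).symm
    | mul x y hx hy ihx ihy =>
      obtain ⟨c, a, b, hxm⟩ := ihx
      obtain ⟨c', a', b', hym⟩ := ihy
      exact ⟨_, _, _, by rw [Units.val_mul, hxm, hym, MP15.repM_mul hp1 hz]⟩
    | inv x hx ihx =>
      obtain ⟨c, a, b, hxm⟩ := ihx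
      refine ⟨(c + a * (p ^ 2 - 1) * b) * (p - 1), a * (p ^ 2 - 1), b * (p - 1), ?_⟩
      have hq2 : 1 + (p ^ 2 - 1) = p ^ 2 := by
        have := Nat.one_le_pow 2 p hpp.pos; omega
      have hq1 : 1 + (p - 1) = p := by omega
      have e1 : c + (c + a * (p ^ 2 - 1) * b) * (p - 1) + a * (p ^ 2 - 1) * b
          = (c + a * (p ^ 2 - 1) * b) * p := by
        rw [show c + (c + a * (p ^ 2 - 1) * b) * (p - 1) + a * (p ^ 2 - 1) * b
          = (c + a * (p ^ 2 - 1) * b) * 1 + (c + a * (p ^ 2 - 1) * b) * (p - 1) by ring,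
          ← Nat.mul_add, hq1]
      have e2 : a + a * (p ^ 2 - 1) = a * p ^ 2 := by
        rw [show a + a * (p ^ 2 - 1) = a * 1 + a * (p ^ 2 - 1) by ring, ← Nat.mul_add, hq2]
      have e3 : b + b * (p - 1) = b * p := by
        rw [show b + b * (p - 1) = b * 1 + b * (p - 1) by ring, ← Nat.mul_add, hq1]
      have hmul : (x : Matrix (Fin p) (Fin p) ℂ)
          * MP15.repM ζ p ((c + a * (p ^ 2 - 1) * b) * (p - 1)) (a * (p ^ 2 - 1)) (b * (p - 1))
          = 1 := by
        rw [hxm, MP15.repM_mul hp1 hz, e1, e2, e3, MP15.repM_one_of hz]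
      exact Units.inv_eq_of_mul_eq_one_right hmul
  have hker : ∀ (N : Matrix (Fin p) (Fin p) ℂ) (v : Fin p → ℂ),
      v ∈ LinearMap.ker (N.mulVecLin - (LinearMap.id : (Fin p → ℂ) →ₗ[ℂ] (Fin p → ℂ)))
        ↔ N.mulVec v = v := by
    intro N v
    rw [LinearMap.mem_ker, LinearMap.sub_apply, Matrix.mulVecLin_apply, LinearMap.id_apply,
      sub_eq_zero]
  -- the key rank bound
  open Fin.NatCast in
  have key : ∀ (g : (Matrix (Fin p) (Fin p) ℂ)ˣ) (c a b : ℕ),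
      (g : Matrix (Fin p) (Fin p) ℂ) = MP15.repM ζ p c a b → g ≠ 1 →
      Module.finrank ℂ
        (LinearMap.ker ((g : Matrix (Fin p) (Fin p) ℂ).mulVecLin
          - (LinearMap.id : (Fin p → ℂ) →ₗ[ℂ] (Fin p → ℂ)))) ≤ 1 := by
    intro g c a b hg hgne
    by_cases hb : b % p = 0
    · -- diagonal case
      have hPb : (MP15.Pm p) ^ b = 1 := by rw [MP15.Pm_pow_mod, hb, pow_zero]
      set e : Fin p → ℂ := fun k => ζ ^ (p * c) * MP15.dvec ζ p k ^ a with he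
      have hgd : (g : Matrix (Fin p) (Fin p) ℂ) = Matrix.diagonal e := by
        rw [hg]; unfold MP15.repM; rw [hPb, mul_one, ← Matrix.diagonal_smul]
        exact congrArg Matrix.diagonal (funext fun k => rfl)
      have hone : ∀ j k : Fin p, e j = 1 → e k = 1 → j = k := by
        by_cases hpa : p ∣ a
        · have hconst : ∀ k : Fin p, e k = ζ ^ (p * c) * ζ ^ a := by
            intro k
            obtain ⟨a₁, ha₁⟩ := hpa
            simp only [he, MP15.dvec, ← pow_mul]
            rw [show (1 + (k : ℕ) * p) * a = a + p ^ 2 * ((k : ℕ) * a₁) by rw [ha₁]; ring,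
              pow_add, pow_mul ζ (p ^ 2), hz, one_pow, mul_one]
          intro j k hj _
          exfalso
          apply hgne
          apply Units.ext
          rw [Units.val_one, hgd]
          have hel : e = fun _ => 1 := by
            funext i; rw [hconst i, ← hconst j, hj]
          rw [hel]
          exact Matrix.diagonal_one
        · intro j k hj hk
          have hej : ∀ i : Fin p, e i = ζ ^ (p * c + a + (i : ℕ) * p * a) := by
            intro i
            simp only [he, MP15.dvec, ← pow_mul, ← pow_add]
            congr 1; ring
          have hdj : p ^ 2 ∣ p * c + a + (j : ℕ) * p * a := (hdvd _).mp ((hej j).symm.trans hj)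
          have hdk : p ^ 2 ∣ p * c + a + (k : ℕ) * p * a := (hdvd _).mp ((hej k).symm.trans hk)
          have h2 : ((p : ℤ)) ^ 2 ∣ ((j : ℕ) : ℤ) * p * a - ((k : ℕ) : ℤ) * p * a := by
            have d1 := Int.natCast_dvd_natCast.mpr hdj
            have d2 := Int.natCast_dvd_natCast.mpr hdk
            push_cast at d1 d2
            have := dvd_sub d1 d2
            convert this using 1
            · rfl
            · ring
          have h3 : (p : ℤ) ∣ (((j : ℕ) : ℤ) - ((k : ℕ) : ℤ)) * a := by
            have hrw : ((j : ℕ) : ℤ) * p * a - ((k : ℕ) : ℤ) * p * a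
                = p * ((((j : ℕ) : ℤ) - ((k : ℕ) : ℤ)) * a) := by ring
            rw [hrw, sq] at h2
            exact (mul_dvd_mul_iff_left (show (p : ℤ) ≠ 0 by exact_mod_cast hpp.ne_zero)).mp h2
          have hprime : Prime (p : ℤ) := Int.prime_iff_natAbs_prime.mpr (by simpa)
          rcases (hprime.dvd_mul.mp h3) with hd | hd
          · have habs : ((j : ℕ) : ℤ) - ((k : ℕ) : ℤ) = 0 := by
              refine Int.eq_zero_of_abs_lt_dvd hd ?_
              have hj' := j.isLt
              have hk' := k.isLt
              rw [abs_lt]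
              constructor <;> [skip; skip] <;> push_cast <;> omega
            have : (j : ℕ) = (k : ℕ) := by omega
            exact Fin.ext this
          · exfalso
            exact hpa (Int.natCast_dvd_natCast.mp hd)
      rw [hgd]
      have hmem : ∀ v : Fin p → ℂ,
          v ∈ LinearMap.ker ((Matrix.diagonal e).mulVecLin
            - (LinearMap.id : (Fin p → ℂ) →ₗ[ℂ] (Fin p → ℂ))) → ∀ i, e i * v i = v i := by
        intro v hv i
        rw [hker] at hv
        have := congrFun hv i
        rwa [Matrix.mulVec_diagonal] at this
      by_cases hex : ∃ k, e k = 1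
      · obtain ⟨k₀, hk₀⟩ := hex
        apply MP15.finrank_le_one_of_coord _ k₀
        intro v hv hv0
        funext i
        show v i = 0
        by_cases hei : e i = 1
        · rw [hone i k₀ hei hk₀]; exact hv0
        · have h0 : (e i - 1) * v i = 0 := by
            rw [sub_mul, one_mul, hmem v hv i, sub_self]
          exact (mul_eq_zero.mp h0).resolve_left (sub_ne_zero.mpr hei)
      · apply MP15.finrank_le_one_of_coord _ 0
        intro v hv _
        funext i
        show v i = 0
        have hei : ¬ e i = 1 := fun h => hex ⟨i, h⟩
        have h0 : (e i - 1) * v i = 0 := by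
          rw [sub_mul, one_mul, hmem v hv i, sub_self]
        exact (mul_eq_zero.mp h0).resolve_left (sub_ne_zero.mpr hei)
    · -- shift case
      apply MP15.finrank_le_one_of_coord _ 0
      intro v hv hv0
      rw [hker] at hv
      have heq : ∀ i : Fin p,
          ζ ^ (p * c) * (MP15.dvec ζ p i ^ a * v (i + (b : Fin p))) = v i := by
        intro i
        rw [← MP15.repM_mulVec, ← hg]
        exact congrFun hv i
      have hcoeff : ∀ i : Fin p, ζ ^ (p * c) * MP15.dvec ζ p i ^ a ≠ 0 :=
        fun i => mul_ne_zero (pow_ne_zero _ hz0) (pow_ne_zero _ (MP15.dvec_ne_zero hz0 i))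
      have hchain : ∀ k : ℕ, v (((k * b : ℕ) : Fin p)) = 0 := by
        intro k
        induction k with
        | zero => simpa using hv0
        | succ k ih =>
          have h := heq (((k * b : ℕ) : Fin p))
          rw [ih] at h
          have h' : v ((((k * b : ℕ) : Fin p)) + (b : Fin p)) = 0 := by
            rcases mul_eq_zero.mp h with h0 | h0
            · exact absurd h0 (pow_ne_zero _ hz0)
            · rcases mul_eq_zero.mp h0 with h1 | h1
              · exact absurd h1 (pow_ne_zero _ (MP15.dvec_ne_zero hz0 _))
              · exact h1
          rw [show (k + 1) * b = k * b + b by ring, Nat.cast_add]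
          exact h'
      funext j
      show v j = 0
      have hnd : ¬ p ∣ b := by
        intro h
        exact hb (Nat.dvd_iff_mod_eq_zero.mp h)
      have hcop : Nat.Coprime b p :=
        Nat.Coprime.symm ((Nat.Prime.coprime_iff_not_dvd hpp).mpr hnd)
      obtain ⟨m, hm⟩ := Nat.exists_mul_mod_eq_one_of_coprime hcop hp1
      have hcast : (((j : ℕ) * m * b : ℕ) : Fin p) = j := by
        have hmod : ((j : ℕ) * m * b) % p = (j : ℕ) % p := by
          rw [show (j : ℕ) * m * b = (j : ℕ) * (b * m) by ring, Nat.mul_mod, hm.2, mul_one]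
          simp [Nat.mod_mod_of_dvd]
        apply Fin.ext
        rw [Fin.val_natCast, hmod, Nat.mod_eq_of_lt j.isLt]
      rw [← hcast]
      exact hchain ((j : ℕ) * m)
  refine ⟨fun g hg hgne => ?_, ?_⟩
  · obtain ⟨c, a, b, hgm⟩ := hrep g hg
    exact key g c a b hgm hgne
  · -- finitely many lines
    set L₀ : Submodule ℂ (Fin p → ℂ) := Submodule.span ℂ {Pi.single (0 : Fin p) (1 : ℂ)}
      with hL
    have hL1 : Module.finrank ℂ L₀ = 1 := by
      refine finrank_span_singleton ?_
      intro h
      have := congrFun h 0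
      simp at this
    set K : ℕ → ℕ → ℕ → Submodule ℂ (Fin p → ℂ) := fun c a b =>
      LinearMap.ker ((MP15.repM ζ p c a b).mulVecLin
        - (LinearMap.id : (Fin p → ℂ) →ₗ[ℂ] (Fin p → ℂ))) with hKdef
    set F : Fin p × Fin (p ^ 2) × Fin p → Submodule ℂ (Fin p → ℂ) := fun t =>
      if Module.finrank ℂ (K t.1.val t.2.1.val t.2.2.val) = 1
        then K t.1.val t.2.1.val t.2.2.val else L₀ with hF
    refine ⟨Finset.image F Finset.univ, ?_, ?_⟩
    · intro W hW
      obtain ⟨t, -, rfl⟩ := Finset.mem_image.mp hW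
      by_cases h : Module.finrank ℂ (K t.1.val t.2.1.val t.2.2.val) = 1
      · rw [show F t = _ from if_pos h]; exact h
      · rw [show F t = _ from if_neg h]; exact hL1
    · rintro v ⟨g, hg, hgne, hfix⟩
      obtain ⟨c, a, b, hgm⟩ := hrep g hg
      have hgm' : (g : Matrix (Fin p) (Fin p) ℂ)
          = MP15.repM ζ p (c % p) (a % p ^ 2) (b % p) := by
        rw [hgm, MP15.repM_mod hz]
      set t : Fin p × Fin (p ^ 2) × Fin p :=
        (⟨c % p, Nat.mod_lt _ hpp.pos⟩, ⟨a % p ^ 2, Nat.mod_lt _ (by positivity)⟩,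
          ⟨b % p, Nat.mod_lt _ hpp.pos⟩) with ht
      have hvK : v ∈ K (c % p) (a % p ^ 2) (b % p) := by
        rw [hKdef]
        refine (hker _ v).mpr ?_
        rw [← hgm']
        exact hfix
      have hrank : Module.finrank ℂ (K (c % p) (a % p ^ 2) (b % p)) ≤ 1 := by
        have hk := key g (c % p) (a % p ^ 2) (b % p) hgm' hgne
        rw [hgm'] at hk
        exact hk
      have hmemF : F t ∈ Finset.image F Finset.univ :=
        Finset.mem_image_of_mem F (Finset.mem_univ t)
      by_cases h1 : Module.finrank ℂ (K (c % p) (a % p ^ 2) (b % p)) = 1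
      · have hFt : F t = K (c % p) (a % p ^ 2) (b % p) := by
          rw [hF]; exact if_pos h1
        exact Set.mem_biUnion hmemF (by rw [hFt]; exact hvK)
      · have h0 : Module.finrank ℂ (K (c % p) (a % p ^ 2) (b % p)) = 0 := by omega
        have hbot : K (c % p) (a % p ^ 2) (b % p) = ⊥ := Submodule.finrank_eq_zero.mp h0
        have hv0 : v = 0 := by
          rw [hbot] at hvK
          simpa using hvK
        exact Set.mem_biUnion hmemF (by rw [hv0]; exact (F t).zero_mem)
end
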